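/- arXiv:1510.06998 — 4 statements merged into one kernel-verified Lean document; each statement's English description precedes it below -/
import Mathlib

section
/- Let t ∈ 𝔫, d ∈ 𝔤, and c ∈ ℂ satisfy ⁅d, t⁆ = c·t, let p ∈ ℂ[X], and set q(X) = p(X − c) − p(X). Then in M_η one has ι(t)·[p(ι(d))] − η(t)·[p(ι(d))] = η(t)·[q(ι(d))]; in particular this element is 0 whenever η(t) = 0. Moreover, if 𝔤 = 𝔞 ⊕ 𝔫 is an internal direct sum of subspaces for some Lie subalgebra 𝔞 of 𝔤 with d ∈ 𝔞, and if η(t) ≠ 0, c ≠ 0, and p is nonconstant, then ι(t)·[p(ι(d))] − η(t)·[p(ι(d))] ≠ 0. -/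
set_option maxHeartbeats 1000000
set_option synthInstance.maxHeartbeats 400000

open UniversalEnvelopingAlgebra Polynomial

attribute [local instance 100] LieRing.ofAssociativeRing

/-- The left ideal of `U(L)` generated by `{ι x - η x • 1 : x ∈ N}`. -/
noncomputable def whittakerIdeal (L : Type*) [LieRing L] [LieAlgebra ℂ L]
    (N : LieSubalgebra ℂ L) (η : N →ₗ⁅ℂ⁆ ℂ) :
    Submodule (UniversalEnvelopingAlgebra ℂ L) (UniversalEnvelopingAlgebra ℂ L) :=
  Submodule.span (UniversalEnvelopingAlgebra ℂ L)
    {a | ∃ x : N, a = ι ℂ (x : L) - algebraMap ℂ (UniversalEnvelopingAlgebra ℂ L) (η x)}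

namespace WhittakerProof

/-! ### Polynomial lemmas -/

lemma eval_shift_eq {c : ℂ} {r : ℂ[X]} (heq : r.comp (X - C c) = r) :
    ∀ k : ℕ, r.eval (-(k : ℂ) * c) = r.eval 0 := by
  intro k
  induction k with
  | zero => norm_num
  | succ k ih =>
    have h2 : r.eval ((-(k:ℂ)*c) - c) = r.eval (-(k:ℂ)*c) := by
      conv_rhs => rw [← heq]
      rw [eval_comp]
      simp
    have h3 : (-((k+1 : ℕ) : ℂ)) * c = (-(k:ℂ)*c) - c := by push_cast; ring
    rw [h3, h2, ih]

lemma comp_sub_ne_zero {c : ℂ} (hc : c ≠ 0) {r : ℂ[X]} (hr : 0 < r.natDegree) :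
    r.comp (X - C c) - r ≠ 0 := by
  rw [sub_ne_zero]
  intro heq
  have hev := eval_shift_eq heq
  have hgne : r - C (r.eval 0) ≠ 0 := by
    intro h0
    have hrc : r = C (r.eval 0) := by rwa [sub_eq_zero] at h0
    rw [hrc, natDegree_C] at hr
    exact lt_irrefl 0 hr
  have hinf : Set.Infinite {x : ℂ | (r - C (r.eval 0)).IsRoot x} := by
    refine Set.infinite_of_injective_forall_mem (f := fun k : ℕ => -(k:ℂ) * c) ?_ ?_
    · intro a b hab
      simp only [neg_mul, neg_inj] at hab
      exact_mod_cast mul_right_cancel₀ hc hab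
    · intro k
      simp only [Set.mem_setOf_eq, IsRoot, eval_sub, eval_C, hev k, sub_self]
  exact hinf (Polynomial.finite_setOf_isRoot hgne)

lemma comp_sub_natDegree_lt {c : ℂ} (hc : c ≠ 0) {r : ℂ[X]} (hr : 0 < r.natDegree) :
    (r.comp (X - C c) - r).natDegree < r.natDegree := by
  have hr0 : r ≠ 0 := fun h => by simp [h] at hr
  have hxc : (X - C c).natDegree = 1 := natDegree_X_sub_C c
  have hnd : (r.comp (X - C c)).natDegree = r.natDegree := by
    rw [natDegree_comp, hxc, mul_one]
  have hlc : (r.comp (X - C c)).leadingCoeff = r.leadingCoeff := by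
    rw [leadingCoeff_comp (by rw [hxc]; exact one_ne_zero), leadingCoeff_X_sub_C,
      one_pow, mul_one]
  have hcne : r.comp (X - C c) ≠ 0 := by
    intro h0
    rw [h0] at hlc
    exact hr0 (leadingCoeff_eq_zero.mp hlc.symm)
  have hdeq : (r.comp (X - C c)).degree = r.degree := by
    rw [degree_eq_natDegree hcne, degree_eq_natDegree hr0, hnd]
  have hdlt : (r.comp (X - C c) - r).degree < r.degree :=
    hdeq ▸ degree_sub_lt hdeq hcne hlc
  exact natDegree_lt_natDegree (comp_sub_ne_zero hc hr) hdlt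

/-- Evaluating a composition with `X - C c`. -/
lemma aeval_comp_X_sub_C {B : Type*} [Ring B] [Algebra ℂ B] (b : B) (c : ℂ) (r : ℂ[X]) :
    aeval b (r.comp (X - C c)) = aeval (b - algebraMap ℂ B c) r := by
  induction r using Polynomial.induction_on' with
  | add u v hu hv => rw [add_comp, map_add, map_add, hu, hv]
  | monomial n k =>
    rw [← C_mul_X_pow_eq_monomial, mul_comp, C_comp, X_pow_comp,
      map_mul, map_mul, aeval_C, aeval_C, map_pow, map_pow, map_sub, aeval_X, aeval_C,
      aeval_X]

/-! ### Generic universal enveloping algebra lemmas -/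

variable {L : Type*} [LieRing L] [LieAlgebra ℂ L]

/-- The counit of `U(L)`. -/
noncomputable def eps (L : Type*) [LieRing L] [LieAlgebra ℂ L] :
    UniversalEnvelopingAlgebra ℂ L →ₐ[ℂ] ℂ :=
  UniversalEnvelopingAlgebra.lift ℂ
    { toLinearMap := (0 : L →ₗ[ℂ] ℂ),
      map_lie' := by intros; simp [Ring.lie_def] }

lemma uea_one_ne_zero : (1 : UniversalEnvelopingAlgebra ℂ L) ≠ 0 := by
  intro h
  have h2 : (1 : ℂ) = 0 := by
    have h3 := congrArg (eps L) h
    rwa [map_one, map_zero] at h3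
  exact one_ne_zero h2

lemma adjoin_range_ι :
    Algebra.adjoin ℂ (Set.range (⇑(ι ℂ) : L → UniversalEnvelopingAlgebra ℂ L)) = ⊤ := by
  set S := Algebra.adjoin ℂ (Set.range (⇑(ι ℂ) : L → UniversalEnvelopingAlgebra ℂ L))
    with hS
  let j : L →ₗ⁅ℂ⁆ S :=
    { toFun := fun x => ⟨ι ℂ x, Algebra.subset_adjoin ⟨x, rfl⟩⟩
      map_add' := fun x y => Subtype.ext (by simp)
      map_smul' := fun k x => Subtype.ext (by simp)
      map_lie' := fun {x y} => Subtype.ext (by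
        show (ι ℂ ⁅x, y⁆ : UniversalEnvelopingAlgebra ℂ L) = _
        rw [LieHom.map_lie, Ring.lie_def]
        rfl) }
  have hg : (S.val.comp (UniversalEnvelopingAlgebra.lift ℂ j)) = AlgHom.id ℂ _ := by
    apply UniversalEnvelopingAlgebra.hom_ext
    ext x
    show S.val ((UniversalEnvelopingAlgebra.lift ℂ j) (ι ℂ x)) = ι ℂ x
    rw [UniversalEnvelopingAlgebra.lift_ι_apply]
    rfl
  rw [eq_top_iff]
  intro u _
  have h2 : S.val ((UniversalEnvelopingAlgebra.lift ℂ j) u) = u := by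
    have h3 := AlgHom.congr_fun hg u
    simpa using h3
  rw [← h2]
  exact ((UniversalEnvelopingAlgebra.lift ℂ j) u).2

theorem uea_induction {P : UniversalEnvelopingAlgebra ℂ L → Prop}
    (h1 : P 1) (hadd : ∀ u v, P u → P v → P (u + v))
    (hsmul : ∀ (k : ℂ) u, P u → P (k • u))
    (hmul : ∀ (a : L) u, P u → P (ι ℂ a * u)) : ∀ u, P u := by
  have h0 : P 0 := by simpa using hsmul 0 1 h1
  intro u
  have hu : u ∈ Submodule.span ℂ
      ((Submonoid.closure (Set.range (⇑(ι ℂ) : L → UniversalEnvelopingAlgebra ℂ L)) :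
        Submonoid _) : Set _) := by
    rw [← Algebra.adjoin_eq_span, adjoin_range_ι]
    exact trivial
  refine Submodule.span_induction ?_ h0 (fun x y _ _ hx hy => hadd x y hx hy)
    (fun k x _ hx => hsmul k x hx) hu
  intro x hx
  refine Submonoid.closure_induction_left (motive := fun m _ => P m) h1 ?_ hx
  rintro x ⟨a, rfl⟩ y hy hPy
  exact hmul a y hPy

section Model

variable (N A : LieSubalgebra ℂ L) (η : N →ₗ⁅ℂ⁆ ℂ)
variable (hco : IsCompl A.toSubmodule N.toSubmodule)

/-- Projection onto `A` along `N`. -/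
noncomputable def sigA : L →ₗ[ℂ] A :=
  A.toSubmodule.linearProjOfIsCompl N.toSubmodule hco

/-- Projection onto `N` along `A`. -/
noncomputable def piN : L →ₗ[ℂ] N :=
  N.toSubmodule.linearProjOfIsCompl A.toSubmodule hco.symm

lemma sigA_coe_A (a : A) : sigA N A hco (a : L) = a :=
  Submodule.linearProjOfIsCompl_apply_left hco a

lemma sigA_coe_N (x : N) : sigA N A hco (x : L) = 0 :=
  Submodule.linearProjOfIsCompl_apply_right hco x

lemma piN_coe_N (x : N) : piN N A hco (x : L) = x :=
  Submodule.linearProjOfIsCompl_apply_left hco.symm x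

lemma piN_coe_A (a : A) : piN N A hco (a : L) = 0 :=
  Submodule.linearProjOfIsCompl_apply_right hco.symm a

lemma sig_add_pi (y : L) : ((sigA N A hco y : L) + (piN N A hco y : L)) = y :=
  Submodule.projection_add_projection_eq_self hco y

/-- The base vector of the model, `F₀ y = η(π y)·1 + ι(σ y)`. -/
noncomputable def F0 : L →ₗ[ℂ] UniversalEnvelopingAlgebra ℂ A :=
  (Algebra.linearMap ℂ (UniversalEnvelopingAlgebra ℂ A)).comp
      (η.toLinearMap.comp (piN N A hco)) +
    ((ι ℂ : A →ₗ⁅ℂ⁆ UniversalEnvelopingAlgebra ℂ A).toLinearMap.comp (sigA N A hco))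

lemma F0_apply (y : L) :
    F0 N A η hco y =
      algebraMap ℂ (UniversalEnvelopingAlgebra ℂ A) (η (piN N A hco y)) +
        ι ℂ (sigA N A hco y) := rfl

lemma F0_coe_A (a : A) : F0 N A η hco (a : L) = ι ℂ a := by
  rw [F0_apply, piN_coe_A, sigA_coe_A, map_zero, map_zero, zero_add]

lemma F0_coe_N (x : N) :
    F0 N A η hco (x : L) = algebraMap ℂ (UniversalEnvelopingAlgebra ℂ A) (η x) := by
  rw [F0_apply, piN_coe_N, sigA_coe_N, map_zero, add_zero]

/-- Right bracketing with an element of `A`, as a linear endomorphism of `L`. -/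
noncomputable def brkt (a : A) : L →ₗ[ℂ] L :=
  { toFun := fun y => ⁅y, (a : L)⁆
    map_add' := fun y z => add_lie y z (a : L)
    map_smul' := fun k y => smul_lie k y (a : L) }

@[simp] lemma brkt_apply (a : A) (y : L) : brkt A a y = ⁅y, (a : L)⁆ := rfl

/-- The operator `Θ a` on `L →ₗ U(A)`. -/
noncomputable def thetaAux (a : A) :
    Module.End ℂ (L →ₗ[ℂ] UniversalEnvelopingAlgebra ℂ A) where
  toFun F := ((LinearMap.mulLeft ℂ (ι ℂ a)).comp F) + (F.comp (brkt A a))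
  map_add' F G := by
    ext y
    simp only [LinearMap.add_apply, LinearMap.comp_apply, LinearMap.mulLeft_apply,
      brkt_apply, mul_add]
    abel
  map_smul' k F := by
    ext y
    simp only [LinearMap.add_apply, LinearMap.smul_apply, LinearMap.comp_apply,
      LinearMap.mulLeft_apply, brkt_apply, RingHom.id_apply, smul_add, mul_smul_comm]

lemma thetaAux_apply (a : A) (F : L →ₗ[ℂ] UniversalEnvelopingAlgebra ℂ A) (y : L) :
    thetaAux A a F y = ι ℂ a * F y + F ⁅y, (a : L)⁆ := rfl

lemma A_coe_add (a b : A) : ((a + b : A) : L) = (a : L) + (b : L) := rfl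

lemma A_coe_smul (k : ℂ) (a : A) : ((k • a : A) : L) = k • (a : L) := rfl

/-- `Θ` as a Lie algebra morphism. -/
noncomputable def theta :
    A →ₗ⁅ℂ⁆ Module.End ℂ (L →ₗ[ℂ] UniversalEnvelopingAlgebra ℂ A) where
  toFun := thetaAux A
  map_add' a b := by
    ext F y
    simp only [thetaAux_apply, LinearMap.add_apply, A_coe_add, lie_add,
      map_add, map_add, add_mul]
    abel
  map_smul' k a := by
    ext F y
    simp only [thetaAux_apply, LinearMap.smul_apply, RingHom.id_apply,
      A_coe_smul, lie_smul, map_smul, map_smul, smul_mul_assoc, smul_add]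
  map_lie' {a b} := by
    ext F y
    have hab : (ι ℂ ⁅a, b⁆ : UniversalEnvelopingAlgebra ℂ A) =
        ι ℂ a * ι ℂ b - ι ℂ b * ι ℂ a := by
      rw [LieHom.map_lie, Ring.lie_def]
    have e1 : ⁅⁅y,(a:L)⁆,(b:L)⁆ = ⁅y,⁅(a:L),(b:L)⁆⁆ - ⁅(a:L),⁅y,(b:L)⁆⁆ :=
      lie_lie y (a:L) (b:L)
    have e2 : ⁅⁅y,(b:L)⁆,(a:L)⁆ = -⁅(a:L),⁅y,(b:L)⁆⁆ := (lie_skew _ _).symm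
    have hyab : ⁅y, ((⁅a, b⁆ : A) : L)⁆ =
        ⁅⁅y, (a:L)⁆, (b:L)⁆ - ⁅⁅y, (b:L)⁆, (a:L)⁆ := by
      rw [LieSubalgebra.coe_bracket, e1, e2]
      abel
    show thetaAux A ⁅a, b⁆ F y = (⁅thetaAux A a, thetaAux A b⁆ :
      Module.End ℂ (L →ₗ[ℂ] UniversalEnvelopingAlgebra ℂ A)) F y
    rw [Ring.lie_def]
    simp only [LinearMap.sub_apply, Module.End.mul_apply, thetaAux_apply]
    rw [hab, hyab, map_sub]
    simp only [mul_add, sub_mul, mul_assoc]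
    abel

/-- The fundamental operator-valued map. -/
noncomputable def Rop (w : UniversalEnvelopingAlgebra ℂ A) :
    L →ₗ[ℂ] UniversalEnvelopingAlgebra ℂ A :=
  (UniversalEnvelopingAlgebra.lift ℂ (theta A) w) (F0 N A η hco)

lemma Rop_one_apply (y : L) : Rop N A η hco 1 y = F0 N A η hco y := by
  unfold Rop
  rw [map_one]
  rfl

lemma Rop_iota_mul (a : A) (w : UniversalEnvelopingAlgebra ℂ A) (y : L) :
    Rop N A η hco (ι ℂ a * w) y =
      ι ℂ a * Rop N A η hco w y + Rop N A η hco w ⁅y, (a : L)⁆ := by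
  unfold Rop
  rw [map_mul, UniversalEnvelopingAlgebra.lift_ι_apply]
  rfl

lemma Rop_iota (a : A) (y : L) :
    Rop N A η hco (ι ℂ a) y =
      ι ℂ a * F0 N A η hco y + F0 N A η hco ⁅y, (a : L)⁆ := by
  have h := Rop_iota_mul N A η hco a 1 y
  rw [mul_one] at h
  rw [h, Rop_one_apply, Rop_one_apply]

lemma Rop_add (w w' : UniversalEnvelopingAlgebra ℂ A) (y : L) :
    Rop N A η hco (w + w') y = Rop N A η hco w y + Rop N A η hco w' y := by
  unfold Rop
  rw [map_add]
  rfl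

lemma Rop_smul (k : ℂ) (w : UniversalEnvelopingAlgebra ℂ A) (y : L) :
    Rop N A η hco (k • w) y = k • Rop N A η hco w y := by
  unfold Rop
  rw [map_smul]
  rfl

lemma Rop_algebraMap (k : ℂ) (y : L) :
    Rop N A η hco (algebraMap ℂ (UniversalEnvelopingAlgebra ℂ A) k) y =
      k • F0 N A η hco y := by
  unfold Rop
  rw [AlgHom.commutes, Module.algebraMap_end_apply, LinearMap.smul_apply]

/-- helper: multiplication by a scalar from the right. -/
lemma mul_algebraMap' (u : UniversalEnvelopingAlgebra ℂ A) (k : ℂ) :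
    u * algebraMap ℂ (UniversalEnvelopingAlgebra ℂ A) k = k • u := by
  rw [← Algebra.commutes, ← Algebra.smul_def]

lemma baseAA (a b : A) :
    Rop N A η hco 1 ⁅(a : L), (b : L)⁆ =
      Rop N A η hco (Rop N A η hco 1 (b : L)) (a : L) -
        Rop N A η hco (Rop N A η hco 1 (a : L)) (b : L) := by
  rw [← LieSubalgebra.coe_bracket, Rop_one_apply, F0_coe_A,
    Rop_one_apply, F0_coe_A, Rop_one_apply, F0_coe_A, Rop_iota, Rop_iota,
    F0_coe_A, F0_coe_A, ← LieSubalgebra.coe_bracket, ← LieSubalgebra.coe_bracket,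
    F0_coe_A, F0_coe_A]
  simp only [LieHom.map_lie, Ring.lie_def]
  abel

lemma baseAN (a : A) (x : N) :
    Rop N A η hco 1 ⁅(a : L), (x : L)⁆ =
      Rop N A η hco (Rop N A η hco 1 (x : L)) (a : L) -
        Rop N A η hco (Rop N A η hco 1 (a : L)) (x : L) := by
  simp only [Rop_one_apply, Rop_algebraMap, Rop_iota, F0_coe_N, F0_coe_A,
    mul_algebraMap']
  rw [show ⁅(x : L), (a : L)⁆ = -⁅(a : L), (x : L)⁆ from (lie_skew _ _).symm, map_neg]
  abel

lemma baseNA (x : N) (a : A) :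
    Rop N A η hco 1 ⁅(x : L), (a : L)⁆ =
      Rop N A η hco (Rop N A η hco 1 (a : L)) (x : L) -
        Rop N A η hco (Rop N A η hco 1 (x : L)) (a : L) := by
  simp only [Rop_one_apply, Rop_algebraMap, Rop_iota, F0_coe_N, F0_coe_A,
    mul_algebraMap']
  abel

lemma baseNN (x x' : N) :
    Rop N A η hco 1 ⁅(x : L), (x' : L)⁆ =
      Rop N A η hco (Rop N A η hco 1 (x' : L)) (x : L) -
        Rop N A η hco (Rop N A η hco 1 (x : L)) (x' : L) := by
  have hlie : η ⁅x, x'⁆ = 0 := by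
    rw [LieHom.map_lie]
    exact (Commute.all (η x) (η x')).lie_eq
  rw [← LieSubalgebra.coe_bracket]
  simp only [Rop_one_apply, Rop_algebraMap, F0_coe_N]
  rw [hlie, map_zero, Algebra.algebraMap_eq_smul_one, Algebra.algebraMap_eq_smul_one,
    smul_smul, smul_smul, mul_comm (η x) (η x'), sub_self]

theorem Rop_bracket :
    ∀ w : UniversalEnvelopingAlgebra ℂ A, ∀ y z : L,
      Rop N A η hco w ⁅y, z⁆ =
        Rop N A η hco (Rop N A η hco w z) y -
          Rop N A η hco (Rop N A η hco w y) z := by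
  refine uea_induction ?_ ?_ ?_ ?_
  · -- base case `w = 1`
    intro y z
    obtain ⟨a, x, rfl⟩ : ∃ (a : A) (x : N), y = (a : L) + (x : L) :=
      ⟨_, _, (sig_add_pi N A hco y).symm⟩
    obtain ⟨b, x', rfl⟩ : ∃ (b : A) (x' : N), z = (b : L) + (x' : L) :=
      ⟨_, _, (sig_add_pi N A hco z).symm⟩
    simp only [lie_add, add_lie, map_add, Rop_add, baseAA, baseAN, baseNA, baseNN]
    abel
  · intro u v hu hv y z
    simp only [Rop_add, map_add]
    rw [hu y z, hv y z]
    abel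
  · intro k u hu y z
    simp only [Rop_smul, map_smul]
    rw [hu y z, smul_sub]
  · intro a u hu y z
    have jac : ⁅⁅y, z⁆, (a : L)⁆ = ⁅⁅y, (a:L)⁆, z⁆ + ⁅y, ⁅z, (a:L)⁆⁆ := by
      rw [lie_lie y z (a : L),
        show ⁅⁅y,(a:L)⁆,z⁆ = -⁅z,⁅y,(a:L)⁆⁆ from (lie_skew _ _).symm]
      abel
    simp only [Rop_iota_mul, Rop_add]
    rw [jac, map_add, hu y z, hu ⁅y, (a:L)⁆ z, hu y ⁅z, (a:L)⁆, mul_sub]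
    abel

/-- The action of `L` on `U(A)`. -/
noncomputable def rho : L →ₗ⁅ℂ⁆ Module.End ℂ (UniversalEnvelopingAlgebra ℂ A) where
  toFun y :=
    { toFun := fun w => Rop N A η hco w y
      map_add' := fun u v => Rop_add N A η hco u v y
      map_smul' := fun k u => Rop_smul N A η hco k u y }
  map_add' y y' := by
    ext w
    exact map_add (Rop N A η hco w) y y'
  map_smul' k y := by
    ext w
    exact map_smul (Rop N A η hco w) k y
  map_lie' {y z} := by
    ext w
    show Rop N A η hco w ⁅y, z⁆ = _
    rw [Ring.lie_def]
    simp only [LinearMap.sub_apply, Module.End.mul_apply]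
    exact Rop_bracket N A η hco w y z

lemma rho_apply (y : L) (w : UniversalEnvelopingAlgebra ℂ A) :
    rho N A η hco y w = Rop N A η hco w y := rfl

/-- The `U(L)`-module structure map on `U(A)`. -/
noncomputable def Phi :
    UniversalEnvelopingAlgebra ℂ L →ₐ[ℂ] Module.End ℂ (UniversalEnvelopingAlgebra ℂ A) :=
  UniversalEnvelopingAlgebra.lift ℂ (rho N A η hco)

lemma Phi_ideal (v : UniversalEnvelopingAlgebra ℂ L) (hv : v ∈ whittakerIdeal L N η) :
    Phi N A η hco v 1 = 0 := by
  refine Submodule.span_induction ?_ ?_ ?_ ?_ hv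
  · rintro g ⟨x, rfl⟩
    rw [map_sub, LinearMap.sub_apply]
    unfold Phi
    rw [UniversalEnvelopingAlgebra.lift_ι_apply, AlgHom.commutes,
      Module.algebraMap_end_apply, rho_apply, Rop_one_apply, F0_coe_N,
      Algebra.algebraMap_eq_smul_one, sub_self]
  · rw [map_zero]
    rfl
  · intro u v _ _ hu hv
    rw [map_add, LinearMap.add_apply, hu, hv, add_zero]
  · intro r v _ hvz
    rw [smul_eq_mul, map_mul, Module.End.mul_apply, hvz, map_zero]

include A hco in
lemma one_not_mem_whittakerIdeal :
    (1 : UniversalEnvelopingAlgebra ℂ L) ∉ whittakerIdeal L N η := by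
  intro hmem
  have h1 := Phi_ideal N A η hco 1 hmem
  have h2 : (Phi N A η hco) 1 = 1 := map_one _
  rw [h2, Module.End.one_apply] at h1
  exact uea_one_ne_zero h1

end Model

end WhittakerProof

open WhittakerProof in
/-- Let `t ∈ 𝔫`, `d ∈ 𝔤`, `c ∈ ℂ` with `⁅d,t⁆ = c•t`, let `p ∈ ℂ[X]` and
`q(X) = p(X-c) - p(X)`.  Then in `M_η`:
`ι t • [p(ι d)] - η t • [p(ι d)] = η t • [q(ι d)]`; in particular this is `0` when
`η t = 0`.  Moreover if `𝔤 = 𝔞 ⊕ 𝔫` with `𝔞` a Lie subalgebra containing `d`, and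
`η t ≠ 0`, `c ≠ 0` and `p` is nonconstant, then
`ι t • [p(ι d)] - η t • [p(ι d)] ≠ 0`. -/
theorem stmt_2 (L : Type*) [LieRing L] [LieAlgebra ℂ L]
    (N : LieSubalgebra ℂ L) (η : N →ₗ⁅ℂ⁆ ℂ)
    (t : N) (d : L) (c : ℂ) (h : ⁅d, (t : L)⁆ = c • (t : L))
    (p q : Polynomial ℂ) (hq : q = p.comp (X - C c) - p) :
    (ι ℂ (t : L) • (Submodule.Quotient.mk (aeval (ι ℂ d) p) :
          UniversalEnvelopingAlgebra ℂ L ⧸ whittakerIdeal L N η)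
        - η t • (Submodule.Quotient.mk (aeval (ι ℂ d) p) :
          UniversalEnvelopingAlgebra ℂ L ⧸ whittakerIdeal L N η)
      = η t • (Submodule.Quotient.mk (aeval (ι ℂ d) q) :
          UniversalEnvelopingAlgebra ℂ L ⧸ whittakerIdeal L N η)) ∧
    (η t = 0 →
      ι ℂ (t : L) • (Submodule.Quotient.mk (aeval (ι ℂ d) p) :
          UniversalEnvelopingAlgebra ℂ L ⧸ whittakerIdeal L N η)
        - η t • (Submodule.Quotient.mk (aeval (ι ℂ d) p) :
          UniversalEnvelopingAlgebra ℂ L ⧸ whittakerIdeal L N η) = 0) ∧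
    (∀ A : LieSubalgebra ℂ L, IsCompl A.toSubmodule N.toSubmodule → d ∈ A →
      η t ≠ 0 → c ≠ 0 → 0 < p.natDegree →
      ι ℂ (t : L) • (Submodule.Quotient.mk (aeval (ι ℂ d) p) :
          UniversalEnvelopingAlgebra ℂ L ⧸ whittakerIdeal L N η)
        - η t • (Submodule.Quotient.mk (aeval (ι ℂ d) p) :
          UniversalEnvelopingAlgebra ℂ L ⧸ whittakerIdeal L N η) ≠ 0) := by
  -- commutation relations
  have hbase : ι ℂ (t : L) * ι ℂ d =
      (ι ℂ d - algebraMap ℂ (UniversalEnvelopingAlgebra ℂ L) c) * ι ℂ (t : L) := by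
    have hlie : ι ℂ d * ι ℂ (t : L) - ι ℂ (t : L) * ι ℂ d = c • ι ℂ (t : L) := by
      rw [← Ring.lie_def, ← LieHom.map_lie, h, map_smul]
    have h2 : ι ℂ (t : L) * ι ℂ d = ι ℂ d * ι ℂ (t : L) - c • ι ℂ (t : L) := by
      rw [← hlie, sub_sub_cancel]
    rw [h2, sub_mul, ← Algebra.smul_def]
  have hpow : ∀ n : ℕ, ι ℂ (t : L) * (ι ℂ d) ^ n =
      (ι ℂ d - algebraMap ℂ (UniversalEnvelopingAlgebra ℂ L) c) ^ n * ι ℂ (t : L) := by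
    intro n
    induction n with
    | zero => simp
    | succ n ih =>
      rw [pow_succ', ← mul_assoc, hbase, mul_assoc, ih, ← mul_assoc, ← pow_succ']
  have hcomm : ∀ r : ℂ[X], ι ℂ (t : L) * aeval (ι ℂ d) r =
      aeval (ι ℂ d) (r.comp (X - C c)) * ι ℂ (t : L) := by
    intro r
    rw [aeval_comp_X_sub_C]
    induction r using Polynomial.induction_on' with
    | add u v hu hv => rw [map_add, map_add, mul_add, add_mul, hu, hv]
    | monomial n k =>
      rw [aeval_monomial, aeval_monomial]
      have hc : ι ℂ (t : L) * (algebraMap ℂ _ k * (ι ℂ d) ^ n) =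
          algebraMap ℂ _ k * (ι ℂ (t : L) * (ι ℂ d) ^ n) := by
        rw [← mul_assoc, ← Algebra.commutes k (ι ℂ (t : L)), mul_assoc]
      rw [hc, hpow n, ← mul_assoc]
  -- the key identity in the quotient
  have key : ∀ r : ℂ[X],
      (ι ℂ (t : L)) • (Submodule.Quotient.mk (aeval (ι ℂ d) r) :
          UniversalEnvelopingAlgebra ℂ L ⧸ whittakerIdeal L N η) =
        η t • Submodule.Quotient.mk (aeval (ι ℂ d) (r.comp (X - C c))) := by
    intro r
    rw [← Submodule.Quotient.mk_smul, smul_eq_mul, hcomm r]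
    set W := aeval (ι ℂ d) (r.comp (X - C c)) with hW
    have hsplit : W * ι ℂ (t : L) =
        W • (ι ℂ (t : L) - algebraMap ℂ (UniversalEnvelopingAlgebra ℂ L) (η t)) +
          η t • W := by
      rw [smul_eq_mul, mul_sub]
      have hmW : W * algebraMap ℂ (UniversalEnvelopingAlgebra ℂ L) (η t) = η t • W := by
        rw [← Algebra.commutes, ← Algebra.smul_def]
      rw [hmW, sub_add_cancel]
    rw [hsplit, Submodule.Quotient.mk_add]
    have hz : (Submodule.Quotient.mk
        (W • (ι ℂ (t : L) - algebraMap ℂ (UniversalEnvelopingAlgebra ℂ L) (η t))) :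
        UniversalEnvelopingAlgebra ℂ L ⧸ whittakerIdeal L N η) = 0 := by
      rw [Submodule.Quotient.mk_eq_zero]
      exact Submodule.smul_mem _ W (Submodule.subset_span ⟨t, rfl⟩)
    rw [hz, zero_add, Submodule.Quotient.mk_smul]
  have part1 : ι ℂ (t : L) • (Submodule.Quotient.mk (aeval (ι ℂ d) p) :
          UniversalEnvelopingAlgebra ℂ L ⧸ whittakerIdeal L N η)
        - η t • (Submodule.Quotient.mk (aeval (ι ℂ d) p) :
          UniversalEnvelopingAlgebra ℂ L ⧸ whittakerIdeal L N η)
      = η t • (Submodule.Quotient.mk (aeval (ι ℂ d) q) :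
          UniversalEnvelopingAlgebra ℂ L ⧸ whittakerIdeal L N η) := by
    rw [key p, hq, map_sub, Submodule.Quotient.mk_sub, smul_sub]
  refine ⟨part1, fun h0 => by rw [part1, h0, zero_smul], ?_⟩
  intro A hA hdA hηt hc hdeg hE
  rw [part1] at hE
  have hQ0 : (Submodule.Quotient.mk (aeval (ι ℂ d) q) :
      UniversalEnvelopingAlgebra ℂ L ⧸ whittakerIdeal L N η) = 0 := by
    have h2 := congrArg (fun v => (η t)⁻¹ • v) hE
    simpa [smul_smul, inv_mul_cancel₀ hηt] using h2
  have hqne : q ≠ 0 := by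
    rw [hq]
    exact comp_sub_ne_zero hc hdeg
  -- a nonzero polynomial of degree zero cannot be in the ideal
  have base0 : ∀ r : ℂ[X], r ≠ 0 → r.natDegree = 0 →
      (Submodule.Quotient.mk (aeval (ι ℂ d) r) :
        UniversalEnvelopingAlgebra ℂ L ⧸ whittakerIdeal L N η) = 0 → False := by
    intro r hr h0 hmk
    obtain ⟨k, hk⟩ := Polynomial.natDegree_eq_zero.mp h0
    have hkne : k ≠ 0 := by
      intro hk0
      rw [hk0] at hk
      rw [← hk] at hr
      simp at hr
    rw [← hk, aeval_C] at hmk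
    rw [Submodule.Quotient.mk_eq_zero] at hmk
    have hmem1 : (1 : UniversalEnvelopingAlgebra ℂ L) ∈ whittakerIdeal L N η := by
      have h2 := Submodule.smul_mem (whittakerIdeal L N η)
        (algebraMap ℂ (UniversalEnvelopingAlgebra ℂ L) k⁻¹) hmk
      rw [smul_eq_mul, ← map_mul, inv_mul_cancel₀ hkne, map_one] at h2
      exact h2
    exact one_not_mem_whittakerIdeal N A η hA hmem1
  have main : ∀ n : ℕ, ∀ r : ℂ[X], r ≠ 0 → r.natDegree ≤ n →
      (Submodule.Quotient.mk (aeval (ι ℂ d) r) :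
        UniversalEnvelopingAlgebra ℂ L ⧸ whittakerIdeal L N η) = 0 → False := by
    intro n
    induction n with
    | zero =>
      intro r hr hdeg0 hmk
      exact base0 r hr (Nat.le_zero.mp hdeg0) hmk
    | succ n ih =>
      intro r hr hdegn hmk
      by_cases h0 : r.natDegree = 0
      · exact base0 r hr h0 hmk
      · have hpos : 0 < r.natDegree := Nat.pos_of_ne_zero h0
        have hstep : (Submodule.Quotient.mk (aeval (ι ℂ d) (r.comp (X - C c))) :
            UniversalEnvelopingAlgebra ℂ L ⧸ whittakerIdeal L N η) = 0 := by
          have hk := key r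
          rw [hmk, smul_zero] at hk
          have h2 := congrArg (fun v => (η t)⁻¹ • v) hk
          simpa [smul_smul, inv_mul_cancel₀ hηt] using h2.symm
        have hsub : (Submodule.Quotient.mk (aeval (ι ℂ d) (r.comp (X - C c) - r)) :
            UniversalEnvelopingAlgebra ℂ L ⧸ whittakerIdeal L N η) = 0 := by
          rw [map_sub, Submodule.Quotient.mk_sub, hstep, hmk, sub_zero]
        have hlt := comp_sub_natDegree_lt hc hpos
        exact ih _ (comp_sub_ne_zero hc hpos)
          (Nat.le_of_lt_succ (lt_of_lt_of_le hlt hdegn)) hsub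
  exact main q.natDegree q hqne le_rfl hQ0
end

section
/- Suppose 𝔤 = 𝔞 ⊕ 𝔫 is an internal direct sum of subspaces, where 𝔞 and 𝔫 are Lie subalgebras of 𝔤. Let θ_𝔞 : U(𝔞) → U(𝔤) be the algebra homomorphism induced by the inclusion 𝔞 ↪ 𝔤. Then the composite ℂ-linear map U(𝔞) → M_η sending u to [θ_𝔞(u)] is a linear isomorphism; in particular M_η is a free module of rank one over the image of U(𝔞). -/
open UniversalEnvelopingAlgebra

attribute [local instance 100] LieRing.ofAssociativeRing

set_option synthInstance.maxHeartbeats 1000000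
set_option maxHeartbeats 2000000

namespace WhittakerAux

variable {L : Type*} [LieRing L] [LieAlgebra ℂ L]

/-- Generation: any subalgebra of `U(L)` containing the range of `ι` is everything. -/
theorem mem_of_forall_iota (S : Subalgebra ℂ (UniversalEnvelopingAlgebra ℂ L))
    (h : ∀ x : L, ι ℂ x ∈ S) (u : UniversalEnvelopingAlgebra ℂ L) : u ∈ S := by
  let f : L →ₗ⁅ℂ⁆ S :=
    { toFun := fun x => ⟨ι ℂ x, h x⟩
      map_add' := fun x y => by ext; simp
      map_smul' := fun c x => by ext; simp
      map_lie' := fun {x y} => by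
        ext
        simp only [LieRing.of_associative_ring_bracket, LieHom.map_lie]
        push_cast
        ring }
  let g := UniversalEnvelopingAlgebra.lift ℂ f
  have hval : S.val.comp g = AlgHom.id ℂ _ := by
    ext x
    show S.val (g (ι ℂ x)) = ι ℂ x
    rw [UniversalEnvelopingAlgebra.lift_ι_apply]
    rfl
  have : S.val (g u) = u := by
    have := congrArg (fun F => F u) hval
    simpa using this
  rw [← this]
  exact (g u).2

/-- Monomial induction for `U(L)`. -/
theorem submodule_induction (S : Submodule ℂ (UniversalEnvelopingAlgebra ℂ L))
    (h1 : (1 : UniversalEnvelopingAlgebra ℂ L) ∈ S)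
    (hmul : ∀ (a : L) (w : UniversalEnvelopingAlgebra ℂ L), w ∈ S → ι ℂ a * w ∈ S)
    (w : UniversalEnvelopingAlgebra ℂ L) : w ∈ S := by
  let T : Subalgebra ℂ (UniversalEnvelopingAlgebra ℂ L) :=
    { carrier := {u | ∀ s ∈ S, u * s ∈ S}
      mul_mem' := fun {u} {v} hu hv s hs => by
        rw [mul_assoc]; exact hu _ (hv _ hs)
      add_mem' := fun {u} {v} hu hv s hs => by
        rw [add_mul]; exact S.add_mem (hu _ hs) (hv _ hs)
      algebraMap_mem' := fun c s hs => by
        rw [Algebra.algebraMap_eq_smul_one, smul_mul_assoc, one_mul]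
        exact S.smul_mem c hs }
  have hT : ∀ x : L, ι ℂ x ∈ T := fun x s hs => hmul x s hs
  have := mem_of_forall_iota T hT w 1 h1
  simpa using this


section Proj

variable (A N : LieSubalgebra ℂ L) (hcompl : IsCompl A.toSubmodule N.toSubmodule)

/-- Projection onto `A` along `N`. -/
noncomputable def pA : L →ₗ[ℂ] A :=
  A.toSubmodule.projectionOnto N.toSubmodule hcompl

/-- Projection onto `N` along `A`. -/
noncomputable def pN : L →ₗ[ℂ] N :=
  N.toSubmodule.projectionOnto A.toSubmodule hcompl.symm

variable {A N}

theorem pA_add_pN (x : L) : (pA A N hcompl x : L) + (pN A N hcompl x : L) = x :=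
  Submodule.projection_add_projection_eq_self hcompl x

@[simp] theorem pA_coe (a : A) : pA A N hcompl (a : L) = a :=
  Submodule.projectionOnto_apply_left hcompl a

@[simp] theorem pA_coe_N (n : N) : pA A N hcompl (n : L) = 0 :=
  Submodule.projectionOnto_apply_of_mem_right hcompl n.2

@[simp] theorem pN_coe (n : N) : pN A N hcompl (n : L) = n :=
  Submodule.projectionOnto_apply_left hcompl.symm n

@[simp] theorem pN_coe_A (a : A) : pN A N hcompl (a : L) = 0 :=
  Submodule.projectionOnto_apply_of_mem_right hcompl.symm a.2

@[simp] theorem pA_bracket_AA (a b : A) :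
    pA A N hcompl ⁅(a : L), (b : L)⁆ = ⁅a, b⁆ := by
  rw [← LieSubalgebra.coe_bracket, pA_coe]

@[simp] theorem pN_bracket_AA (a b : A) :
    pN A N hcompl ⁅(a : L), (b : L)⁆ = 0 := by
  rw [← LieSubalgebra.coe_bracket, pN_coe_A]

@[simp] theorem pA_bracket_NN (m n : N) :
    pA A N hcompl ⁅(m : L), (n : L)⁆ = 0 := by
  rw [← LieSubalgebra.coe_bracket, pA_coe_N]

@[simp] theorem pN_bracket_NN (m n : N) :
    pN A N hcompl ⁅(m : L), (n : L)⁆ = ⁅m, n⁆ := by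
  rw [← LieSubalgebra.coe_bracket, pN_coe]

end Proj


section Rep

variable (A N : LieSubalgebra ℂ L) (hcompl : IsCompl A.toSubmodule N.toSubmodule)

/-- The operator on pairs `(u, w)` implementing left multiplication by `ι a` together with the
cocycle action on the `N`-component. -/
noncomputable def lamW (a : A) (u : UniversalEnvelopingAlgebra ℂ A)
    (w : N →ₗ[ℂ] UniversalEnvelopingAlgebra ℂ A) :
    N →ₗ[ℂ] UniversalEnvelopingAlgebra ℂ A where
  toFun n := ι ℂ a * w n + ι ℂ (pA A N hcompl ⁅(n : L), (a : L)⁆) * u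
    + w (pN A N hcompl ⁅(n : L), (a : L)⁆)
  map_add' n n' := by
    push_cast
    simp only [add_lie, map_add, map_add, mul_add, add_mul]
    abel
  map_smul' c n := by
    rw [show ((c • n : ↥N) : L) = c • (n : L) from rfl]
    simp only [SetLike.val_smul, smul_lie, map_smul, map_smul, smul_mul_assoc,
      mul_smul_comm, smul_add, RingHom.id_apply]

@[simp] theorem lamW_apply (a : A) (u : UniversalEnvelopingAlgebra ℂ A)
    (w : N →ₗ[ℂ] UniversalEnvelopingAlgebra ℂ A) (n : N) :
    lamW A N hcompl a u w n = ι ℂ a * w n + ι ℂ (pA A N hcompl ⁅(n : L), (a : L)⁆) * u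
      + w (pN A N hcompl ⁅(n : L), (a : L)⁆) := rfl

theorem iota_bracket (X Y : A) :
    ι ℂ ⁅X, Y⁆ = ι ℂ X * ι ℂ Y - ι ℂ Y * ι ℂ X := by
  rw [LieHom.map_lie, Ring.lie_def]

theorem jacobi_key (a b : A) (n : N) :
    ⁅(n : L), ((⁅a, b⁆ : A) : L)⁆ =
      ⁅((pA A N hcompl ⁅(n : L), (a : L)⁆ : A) : L), (b : L)⁆
      + ⁅((pN A N hcompl ⁅(n : L), (a : L)⁆ : N) : L), (b : L)⁆
      + ⁅(a : L), ((pA A N hcompl ⁅(n : L), (b : L)⁆ : A) : L)⁆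
      + ⁅(a : L), ((pN A N hcompl ⁅(n : L), (b : L)⁆ : N) : L)⁆ := by
  rw [LieSubalgebra.coe_bracket]
  conv_lhs => rw [leibniz_lie, ← pA_add_pN hcompl ⁅(n : L), (a : L)⁆,
    ← pA_add_pN hcompl ⁅(n : L), (b : L)⁆]
  rw [add_lie, lie_add]
  abel

theorem jacobi_pA (a b : A) (n : N) :
    pA A N hcompl ⁅(n : L), ((⁅a, b⁆ : A) : L)⁆ =
      ⁅pA A N hcompl ⁅(n : L), (a : L)⁆, b⁆ + ⁅a, pA A N hcompl ⁅(n : L), (b : L)⁆⁆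
      + pA A N hcompl ⁅((pN A N hcompl ⁅(n : L), (a : L)⁆ : N) : L), (b : L)⁆
      - pA A N hcompl ⁅((pN A N hcompl ⁅(n : L), (b : L)⁆ : N) : L), (a : L)⁆ := by
  rw [jacobi_key A N hcompl a b n]
  rw [show ⁅(a : L), ((pN A N hcompl ⁅(n : L), (b : L)⁆ : N) : L)⁆
      = -⁅((pN A N hcompl ⁅(n : L), (b : L)⁆ : N) : L), (a : L)⁆ from (lie_skew _ _).symm]
  simp only [map_add, map_neg, pA_bracket_AA]
  abel

theorem jacobi_pN (a b : A) (n : N) :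
    pN A N hcompl ⁅(n : L), ((⁅a, b⁆ : A) : L)⁆ =
      pN A N hcompl ⁅((pN A N hcompl ⁅(n : L), (a : L)⁆ : N) : L), (b : L)⁆
      - pN A N hcompl ⁅((pN A N hcompl ⁅(n : L), (b : L)⁆ : N) : L), (a : L)⁆ := by
  rw [jacobi_key A N hcompl a b n]
  rw [show ⁅(a : L), ((pN A N hcompl ⁅(n : L), (b : L)⁆ : N) : L)⁆
      = -⁅((pN A N hcompl ⁅(n : L), (b : L)⁆ : N) : L), (a : L)⁆ from (lie_skew _ _).symm]
  simp only [map_add, map_neg, pN_bracket_AA]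
  abel

/-- The linear operator on `U(A) × Hom(N, U(A))` attached to `a : A`. -/
noncomputable def lam0 (a : A) :
    (UniversalEnvelopingAlgebra ℂ A × (N →ₗ[ℂ] UniversalEnvelopingAlgebra ℂ A)) →ₗ[ℂ]
      (UniversalEnvelopingAlgebra ℂ A × (N →ₗ[ℂ] UniversalEnvelopingAlgebra ℂ A)) where
  toFun v := (ι ℂ a * v.1, lamW A N hcompl a v.1 v.2)
  map_add' v v' := by
    refine Prod.ext (by simp [mul_add]) ?_
    refine LinearMap.ext fun n => ?_
    simp only [lamW_apply, Prod.fst_add, Prod.snd_add, LinearMap.add_apply, mul_add, add_mul]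
    abel
  map_smul' c v := by
    refine Prod.ext (by simp) ?_
    refine LinearMap.ext fun n => ?_
    simp only [lamW_apply, Prod.smul_fst, Prod.smul_snd, LinearMap.smul_apply, RingHom.id_apply,
      mul_smul_comm, smul_mul_assoc, smul_add]

@[simp] theorem lam0_apply (a : A) (v) :
    lam0 A N hcompl a v = (ι ℂ a * v.1, lamW A N hcompl a v.1 v.2) := rfl

/-- The Lie algebra homomorphism `A → End (U(A) × Hom(N, U(A)))`. -/
noncomputable def lamL : A →ₗ⁅ℂ⁆
    Module.End ℂ (UniversalEnvelopingAlgebra ℂ A × (N →ₗ[ℂ] UniversalEnvelopingAlgebra ℂ A)) where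
  toFun := lam0 A N hcompl
  map_add' a b := by
    refine LinearMap.ext fun v => ?_
    refine Prod.ext (by simp [add_mul]) ?_
    refine LinearMap.ext fun n => ?_
    simp only [lam0_apply, lamW_apply, LinearMap.add_apply, Prod.fst_add, Prod.snd_add]
    push_cast
    simp only [lie_add, map_add, map_add, add_mul, LinearMap.add_apply]
    abel
  map_smul' c a := by
    refine LinearMap.ext fun v => ?_
    refine Prod.ext (by simp) ?_
    refine LinearMap.ext fun n => ?_
    simp only [lam0_apply, lamW_apply, LinearMap.smul_apply, Prod.smul_fst, Prod.smul_snd,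
      RingHom.id_apply]
    rw [show ((c • a : ↥A) : L) = c • (a : L) from rfl]
    simp only [lie_smul, map_smul, map_smul, smul_mul_assoc, LinearMap.smul_apply,
      smul_add]
  map_lie' {a b} := by
    refine LinearMap.ext fun v => ?_
    rw [Ring.lie_def]
    refine Prod.ext ?_ ?_
    · simp only [LinearMap.sub_apply, Module.End.mul_apply, lam0_apply, Prod.fst_sub,
        iota_bracket]
      noncomm_ring
    · refine LinearMap.ext fun n => ?_
      simp only [LinearMap.sub_apply, Module.End.mul_apply, lam0_apply, Prod.snd_sub,
        LinearMap.sub_apply, lamW_apply]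
      rw [jacobi_pA A N hcompl a b n, jacobi_pN A N hcompl a b n]
      simp only [map_add, map_sub, map_add, map_sub, iota_bracket,
        LinearMap.sub_apply, LinearMap.add_apply]
      noncomm_ring

variable (η : N →ₗ⁅ℂ⁆ ℂ)

/-- `n ↦ η n • 1` as a linear map. -/
noncomputable def etaOne : N →ₗ[ℂ] UniversalEnvelopingAlgebra ℂ A :=
  (Algebra.linearMap ℂ (UniversalEnvelopingAlgebra ℂ A)).comp η.toLinearMap

@[simp] theorem etaOne_apply (n : N) :
    etaOne A N η n = algebraMap ℂ (UniversalEnvelopingAlgebra ℂ A) (η n) := rfl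

/-- The lifted algebra morphism `U(A) → End (U(A) × Hom(N, U(A)))`. -/
noncomputable def Lam : UniversalEnvelopingAlgebra ℂ A →ₐ[ℂ]
    Module.End ℂ (UniversalEnvelopingAlgebra ℂ A × (N →ₗ[ℂ] UniversalEnvelopingAlgebra ℂ A)) :=
  UniversalEnvelopingAlgebra.lift ℂ (lamL A N hcompl)

@[simp] theorem Lam_iota (a : A) : Lam A N hcompl (ι ℂ a) = lam0 A N hcompl a :=
  UniversalEnvelopingAlgebra.lift_ι_apply ℂ _ a

/-- The base point. -/
noncomputable def x0 : UniversalEnvelopingAlgebra ℂ A × (N →ₗ[ℂ] UniversalEnvelopingAlgebra ℂ A) :=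
  (1, etaOne A N η)

theorem Phi_fst (w : UniversalEnvelopingAlgebra ℂ A) :
    (Lam A N hcompl w (x0 A N η)).1 = w := by
  let S : Submodule ℂ (UniversalEnvelopingAlgebra ℂ A) :=
    { carrier := {w | (Lam A N hcompl w (x0 A N η)).1 = w}
      add_mem' := fun {x y} hx hy => by
        simp only [Set.mem_setOf_eq, map_add, LinearMap.add_apply, Prod.fst_add] at *
        rw [hx, hy]
      zero_mem' := by simp
      smul_mem' := fun c x hx => by
        simp only [Set.mem_setOf_eq, map_smul, LinearMap.smul_apply, Prod.smul_fst] at *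
        rw [hx] }
  refine submodule_induction S ?_ ?_ w
  · show (Lam A N hcompl 1 (x0 A N η)).1 = 1
    simp [x0]
  · intro a w hw
    show (Lam A N hcompl (ι ℂ a * w) (x0 A N η)).1 = ι ℂ a * w
    rw [map_mul, Module.End.mul_apply, Lam_iota, lam0_apply]
    show ι ℂ a * (Lam A N hcompl w (x0 A N η)).1 = _
    rw [hw]

/-- The operator `ρ(n)` on `U(A)`. -/
noncomputable def Rop (n : N) : Module.End ℂ (UniversalEnvelopingAlgebra ℂ A) where
  toFun w := (Lam A N hcompl w (x0 A N η)).2 n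
  map_add' x y := by simp
  map_smul' c x := by simp

theorem Rop_apply (n : N) (w : UniversalEnvelopingAlgebra ℂ A) :
    Rop A N hcompl η n w = (Lam A N hcompl w (x0 A N η)).2 n := rfl

@[simp] theorem Rop_one (n : N) :
    Rop A N hcompl η n 1 = algebraMap ℂ (UniversalEnvelopingAlgebra ℂ A) (η n) := by
  rw [Rop_apply]; simp [x0]

theorem Rop_addN (n₁ n₂ : N) (w : UniversalEnvelopingAlgebra ℂ A) :
    Rop A N hcompl η (n₁ + n₂) w = Rop A N hcompl η n₁ w + Rop A N hcompl η n₂ w := by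
  simp [Rop_apply]

theorem Rop_subN (n₁ n₂ : N) (w : UniversalEnvelopingAlgebra ℂ A) :
    Rop A N hcompl η (n₁ - n₂) w = Rop A N hcompl η n₁ w - Rop A N hcompl η n₂ w := by
  simp [Rop_apply]

theorem Rop_zeroN (w : UniversalEnvelopingAlgebra ℂ A) :
    Rop A N hcompl η 0 w = 0 := by
  simp [Rop_apply]

/-- The key recursion for `ρ(n)`. -/
theorem Rop_mul (a : A) (n : N) (w : UniversalEnvelopingAlgebra ℂ A) :
    Rop A N hcompl η n (ι ℂ a * w) =
      ι ℂ a * Rop A N hcompl η n w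
      + ι ℂ (pA A N hcompl ⁅(n : L), (a : L)⁆) * w
      + Rop A N hcompl η (pN A N hcompl ⁅(n : L), (a : L)⁆) w := by
  simp only [Rop_apply, map_mul, Module.End.mul_apply, Lam_iota, lam0_apply, lamW_apply]
  rw [Phi_fst]

theorem jacobiN_key (m n : N) (a : A) :
    ⁅((⁅m, n⁆ : N) : L), (a : L)⁆ =
      ⁅(m : L), ((pA A N hcompl ⁅(n : L), (a : L)⁆ : A) : L)⁆
      + ⁅(m : L), ((pN A N hcompl ⁅(n : L), (a : L)⁆ : N) : L)⁆
      - ⁅(n : L), ((pA A N hcompl ⁅(m : L), (a : L)⁆ : A) : L)⁆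
      - ⁅(n : L), ((pN A N hcompl ⁅(m : L), (a : L)⁆ : N) : L)⁆ := by
  rw [LieSubalgebra.coe_bracket, lie_lie]
  conv_lhs => rw [← pA_add_pN hcompl ⁅(n : L), (a : L)⁆, ← pA_add_pN hcompl ⁅(m : L), (a : L)⁆]
  rw [lie_add, lie_add]
  abel

theorem jacobiN_pA (m n : N) (a : A) :
    pA A N hcompl ⁅((⁅m, n⁆ : N) : L), (a : L)⁆ =
      pA A N hcompl ⁅(m : L), ((pA A N hcompl ⁅(n : L), (a : L)⁆ : A) : L)⁆
      - pA A N hcompl ⁅(n : L), ((pA A N hcompl ⁅(m : L), (a : L)⁆ : A) : L)⁆ := by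
  rw [jacobiN_key A N hcompl m n a]
  simp only [map_add, map_sub, pA_bracket_NN]
  abel

theorem jacobiN_pN (m n : N) (a : A) :
    pN A N hcompl ⁅((⁅m, n⁆ : N) : L), (a : L)⁆ =
      pN A N hcompl ⁅(m : L), ((pA A N hcompl ⁅(n : L), (a : L)⁆ : A) : L)⁆
      - pN A N hcompl ⁅(n : L), ((pA A N hcompl ⁅(m : L), (a : L)⁆ : A) : L)⁆
      + ⁅m, pN A N hcompl ⁅(n : L), (a : L)⁆⁆
      + ⁅pN A N hcompl ⁅(m : L), (a : L)⁆, n⁆ := by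
  rw [jacobiN_key A N hcompl m n a,
    show ⁅pN A N hcompl ⁅(m : L), (a : L)⁆, n⁆ = -⁅n, pN A N hcompl ⁅(m : L), (a : L)⁆⁆ from
      (lie_skew _ _).symm]
  simp only [map_add, map_sub, pN_bracket_NN]
  abel

theorem Rop_comm (w : UniversalEnvelopingAlgebra ℂ A) (m n : N) :
    Rop A N hcompl η m (Rop A N hcompl η n w) - Rop A N hcompl η n (Rop A N hcompl η m w)
      = Rop A N hcompl η ⁅m, n⁆ w := by
  let S : Submodule ℂ (UniversalEnvelopingAlgebra ℂ A) :=
    { carrier := {w | ∀ m n : N,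
        Rop A N hcompl η m (Rop A N hcompl η n w) - Rop A N hcompl η n (Rop A N hcompl η m w)
          = Rop A N hcompl η ⁅m, n⁆ w}
      add_mem' := fun {x y} hx hy m n => by
        simp only [map_add]
        rw [← hx m n, ← hy m n]
        abel
      zero_mem' := fun m n => by simp
      smul_mem' := fun c x hx m n => by
        simp only [map_smul]
        rw [← hx m n]
        simp [smul_sub] }
  refine submodule_induction S ?_ ?_ w m n
  · intro m n
    show Rop A N hcompl η m (Rop A N hcompl η n 1) - _ = _
    simp only [Rop_one, Algebra.algebraMap_eq_smul_one, map_smul, Rop_one, LieHom.map_lie,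
      Ring.lie_def]
    rw [smul_smul, smul_smul, mul_comm (η n) (η m), sub_smul]
  · intro a w hw m n
    show Rop A N hcompl η m (Rop A N hcompl η n (ι ℂ a * w)) - _ = _
    have eq1 : Rop A N hcompl η m (Rop A N hcompl η n w)
        = Rop A N hcompl η n (Rop A N hcompl η m w) + Rop A N hcompl η ⁅m, n⁆ w := by
      rw [← hw m n]; abel
    have eq2 : Rop A N hcompl η m
          (Rop A N hcompl η (pN A N hcompl ⁅(n : L), (a : L)⁆) w)
        = Rop A N hcompl η (pN A N hcompl ⁅(n : L), (a : L)⁆) (Rop A N hcompl η m w)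
          + Rop A N hcompl η ⁅m, pN A N hcompl ⁅(n : L), (a : L)⁆⁆ w := by
      rw [← hw m (pN A N hcompl ⁅(n : L), (a : L)⁆)]; abel
    have eq3 : Rop A N hcompl η (pN A N hcompl ⁅(m : L), (a : L)⁆)
          (Rop A N hcompl η n w)
        = Rop A N hcompl η n (Rop A N hcompl η (pN A N hcompl ⁅(m : L), (a : L)⁆) w)
          + Rop A N hcompl η ⁅pN A N hcompl ⁅(m : L), (a : L)⁆, n⁆ w := by
      rw [← hw (pN A N hcompl ⁅(m : L), (a : L)⁆) n]; abel
    rw [Rop_mul A N hcompl η a n w, Rop_mul A N hcompl η a m w]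
    simp only [map_add]
    rw [Rop_mul A N hcompl η a m (Rop A N hcompl η n w),
      Rop_mul A N hcompl η a n (Rop A N hcompl η m w),
      Rop_mul A N hcompl η (pA A N hcompl ⁅(n : L), (a : L)⁆) m w,
      Rop_mul A N hcompl η (pA A N hcompl ⁅(m : L), (a : L)⁆) n w,
      Rop_mul A N hcompl η a ⁅m, n⁆ w,
      jacobiN_pA A N hcompl m n a, jacobiN_pN A N hcompl m n a]
    rw [eq1, eq2, eq3]
    simp only [map_sub, map_add, map_sub, map_add, sub_mul, add_mul, mul_add,
      Rop_addN, Rop_subN]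
    abel

theorem Rop_negN (n : N) (w : UniversalEnvelopingAlgebra ℂ A) :
    Rop A N hcompl η (-n) w = -Rop A N hcompl η n w := by
  simp [Rop_apply]

theorem Rop_smulN (c : ℂ) (n : N) (w : UniversalEnvelopingAlgebra ℂ A) :
    Rop A N hcompl η (c • n) w = c • Rop A N hcompl η n w := by
  simp [Rop_apply]

/-- The representation of `L` on `U(A)`. -/
noncomputable def rhoL : L →ₗ⁅ℂ⁆ Module.End ℂ (UniversalEnvelopingAlgebra ℂ A) where
  toFun x := LinearMap.mulLeft ℂ (ι ℂ (pA A N hcompl x)) + Rop A N hcompl η (pN A N hcompl x)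
  map_add' x y := by
    refine LinearMap.ext fun w => ?_
    simp only [map_add, map_add, LinearMap.add_apply, LinearMap.mulLeft_apply, add_mul,
      Rop_addN]
    abel
  map_smul' c x := by
    refine LinearMap.ext fun w => ?_
    simp only [map_smul, map_smul, LinearMap.add_apply, LinearMap.smul_apply,
      LinearMap.mulLeft_apply, smul_mul_assoc, Rop_smulN, RingHom.id_apply, smul_add]
  map_lie' {x y} := by
    refine LinearMap.ext fun w => ?_
    have hbr : ⁅x, y⁆ =
        ⁅((pA A N hcompl x : A) : L), ((pA A N hcompl y : A) : L)⁆
        - ⁅((pN A N hcompl y : N) : L), ((pA A N hcompl x : A) : L)⁆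
        + ⁅((pN A N hcompl x : N) : L), ((pA A N hcompl y : A) : L)⁆
        + ⁅((pN A N hcompl x : N) : L), ((pN A N hcompl y : N) : L)⁆ := by
      conv_lhs => rw [← pA_add_pN hcompl x, ← pA_add_pN hcompl y]
      rw [add_lie, lie_add, lie_add,
        show ⁅((pA A N hcompl x : A) : L), ((pN A N hcompl y : N) : L)⁆
          = -⁅((pN A N hcompl y : N) : L), ((pA A N hcompl x : A) : L)⁆ from (lie_skew _ _).symm]
      abel
    rw [Ring.lie_def]
    simp only [LinearMap.sub_apply, Module.End.mul_apply, LinearMap.add_apply,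
      LinearMap.mulLeft_apply, map_add]
    rw [Rop_mul A N hcompl η (pA A N hcompl y) (pN A N hcompl x) w,
      Rop_mul A N hcompl η (pA A N hcompl x) (pN A N hcompl y) w,
      show Rop A N hcompl η (pN A N hcompl x) (Rop A N hcompl η (pN A N hcompl y) w)
        = Rop A N hcompl η (pN A N hcompl y) (Rop A N hcompl η (pN A N hcompl x) w)
          + Rop A N hcompl η ⁅pN A N hcompl x, pN A N hcompl y⁆ w from by
        rw [← Rop_comm A N hcompl η w (pN A N hcompl x) (pN A N hcompl y)]; abel,
      hbr]
    simp only [map_add, map_sub, map_add, map_sub, pA_bracket_AA, pN_bracket_AA,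
      pA_bracket_NN, pN_bracket_NN, iota_bracket, Rop_addN, Rop_subN, Rop_zeroN, sub_mul,
      add_mul, mul_add, zero_add, add_zero, mul_assoc]
    abel

/-- The lifted representation `U(L) → End U(A)`. -/
noncomputable def LamL : UniversalEnvelopingAlgebra ℂ L →ₐ[ℂ]
    Module.End ℂ (UniversalEnvelopingAlgebra ℂ A) :=
  UniversalEnvelopingAlgebra.lift ℂ (rhoL A N hcompl η)

@[simp] theorem LamL_iota (x : L) :
    LamL A N hcompl η (ι ℂ x) = rhoL A N hcompl η x :=
  UniversalEnvelopingAlgebra.lift_ι_apply ℂ _ x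

theorem rhoL_apply (x : L) (w : UniversalEnvelopingAlgebra ℂ A) :
    rhoL A N hcompl η x w = ι ℂ (pA A N hcompl x) * w
      + Rop A N hcompl η (pN A N hcompl x) w := rfl

variable (θA : UniversalEnvelopingAlgebra ℂ A →ₐ[ℂ] UniversalEnvelopingAlgebra ℂ L)

theorem theta_iota (hθA : θA = UniversalEnvelopingAlgebra.lift ℂ ((ι ℂ).comp A.incl))
    (a : A) : θA (ι ℂ a) = ι ℂ (a : L) := by
  rw [hθA, UniversalEnvelopingAlgebra.lift_ι_apply]
  rfl

/-- `Ψ(θA u) = u`. -/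
theorem Psi_theta (hθA : θA = UniversalEnvelopingAlgebra.lift ℂ ((ι ℂ).comp A.incl))
    (u : UniversalEnvelopingAlgebra ℂ A) :
    LamL A N hcompl η (θA u) 1 = u := by
  have hcomp : (LamL A N hcompl η).comp θA = Algebra.lmul ℂ (UniversalEnvelopingAlgebra ℂ A) := by
    apply UniversalEnvelopingAlgebra.hom_ext
    apply LieHom.ext
    intro a
    show LamL A N hcompl η (θA (ι ℂ a)) = Algebra.lmul ℂ _ (ι ℂ a)
    rw [theta_iota A θA hθA a, LamL_iota]
    refine LinearMap.ext fun w => ?_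
    rw [rhoL_apply]
    simp [Rop_zeroN]
  have := congrArg (fun F => F u 1) hcomp
  simpa using this

theorem Psi_ideal (v : UniversalEnvelopingAlgebra ℂ L) (hv : v ∈ whittakerIdeal L N η) :
    LamL A N hcompl η v 1 = 0 := by
  refine Submodule.span_induction ?_ ?_ ?_ ?_ hv
  · rintro v ⟨x, rfl⟩
    rw [map_sub, AlgHom.commutes, LinearMap.sub_apply, LamL_iota, rhoL_apply]
    simp [Module.algebraMap_end_apply, Algebra.algebraMap_eq_smul_one]
  · simp
  · intro v v' _ _ hv hv'
    rw [map_add, LinearMap.add_apply, hv, hv', add_zero]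
  · intro c v _ hv
    rw [smul_eq_mul, map_mul, Module.End.mul_apply, hv, map_zero]

theorem smul_ideal_mem (c : ℂ) (v : UniversalEnvelopingAlgebra ℂ L)
    (hv : v ∈ whittakerIdeal L N η) : c • v ∈ whittakerIdeal L N η := by
  rw [Algebra.smul_def]
  exact (whittakerIdeal L N η).smul_mem _ hv

theorem mul_ideal_mem (u v : UniversalEnvelopingAlgebra ℂ L)
    (hv : v ∈ whittakerIdeal L N η) : u * v ∈ whittakerIdeal L N η :=
  (whittakerIdeal L N η).smul_mem u hv

/-- The intertwining property. -/
theorem intertwine (hθA : θA = UniversalEnvelopingAlgebra.lift ℂ ((ι ℂ).comp A.incl))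
    (w : UniversalEnvelopingAlgebra ℂ A) (n : N) :
    ι ℂ (n : L) * θA w - θA (Rop A N hcompl η n w) ∈ whittakerIdeal L N η := by
  let S : Submodule ℂ (UniversalEnvelopingAlgebra ℂ A) :=
    { carrier := {w | ∀ n : N,
        ι ℂ (n : L) * θA w - θA (Rop A N hcompl η n w) ∈ whittakerIdeal L N η}
      add_mem' := fun {x y} hx hy n => by
        have := (whittakerIdeal L N η).add_mem (hx n) (hy n)
        rw [show ι ℂ (n : L) * θA x - θA (Rop A N hcompl η n x)
            + (ι ℂ (n : L) * θA y - θA (Rop A N hcompl η n y))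
            = ι ℂ (n : L) * θA (x + y) - θA (Rop A N hcompl η n (x + y)) from by
          simp only [map_add, mul_add]; abel] at this
        exact this
      zero_mem' := fun n => by simp
      smul_mem' := fun c x hx n => by
        have := smul_ideal_mem N η c _ (hx n)
        rw [show c • (ι ℂ (n : L) * θA x - θA (Rop A N hcompl η n x))
            = ι ℂ (n : L) * θA (c • x) - θA (Rop A N hcompl η n (c • x)) from by
          simp only [map_smul, smul_sub, mul_smul_comm]] at this
        exact this }
  refine submodule_induction S ?_ ?_ w n
  · intro n
    show ι ℂ (n : L) * θA 1 - θA (Rop A N hcompl η n 1) ∈ _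
    rw [map_one, mul_one, Rop_one, AlgHom.commutes]
    exact Submodule.subset_span ⟨n, rfl⟩
  · intro a w hw n
    show ι ℂ (n : L) * θA (ι ℂ a * w) - θA (Rop A N hcompl η n (ι ℂ a * w)) ∈ _
    have h1 : ι ℂ (a : L) * (ι ℂ (n : L) * θA w) - ι ℂ (a : L) * θA (Rop A N hcompl η n w)
        ∈ whittakerIdeal L N η := by
      have := mul_ideal_mem N η (ι ℂ (a : L)) _ (hw n)
      rwa [mul_sub] at this
    have h2 := hw (pN A N hcompl ⁅(n : L), (a : L)⁆)
    have hcomm : ι ℂ (n : L) * ι ℂ (a : L) = ι ℂ (a : L) * ι ℂ (n : L)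
        + ι ℂ ((pA A N hcompl ⁅(n : L), (a : L)⁆ : A) : L)
        + ι ℂ ((pN A N hcompl ⁅(n : L), (a : L)⁆ : N) : L) := by
      have hb := (ι ℂ : L →ₗ⁅ℂ⁆ UniversalEnvelopingAlgebra ℂ L).map_lie (n : L) (a : L)
      rw [Ring.lie_def] at hb
      have hd : ⁅(n : L), (a : L)⁆ = ((pA A N hcompl ⁅(n : L), (a : L)⁆ : A) : L)
          + ((pN A N hcompl ⁅(n : L), (a : L)⁆ : N) : L) := (pA_add_pN hcompl _).symm
      rw [hd, map_add] at hb
      rw [add_assoc, hb]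
      abel
    have goalEq : ι ℂ (n : L) * θA (ι ℂ a * w) - θA (Rop A N hcompl η n (ι ℂ a * w))
        = (ι ℂ (a : L) * (ι ℂ (n : L) * θA w) - ι ℂ (a : L) * θA (Rop A N hcompl η n w))
          + (ι ℂ ((pN A N hcompl ⁅(n : L), (a : L)⁆ : N) : L) * θA w
            - θA (Rop A N hcompl η (pN A N hcompl ⁅(n : L), (a : L)⁆) w)) := by
      rw [Rop_mul, map_mul]
      simp only [map_add, map_mul, theta_iota A θA hθA]
      rw [← mul_assoc, hcomm]
      noncomm_ring
    rw [goalEq]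
    exact (whittakerIdeal L N η).add_mem h1 h2

/-- Key lemma for surjectivity. -/
theorem surj_key (hθA : θA = UniversalEnvelopingAlgebra.lift ℂ ((ι ℂ).comp A.incl))
    (u : UniversalEnvelopingAlgebra ℂ L) (w : UniversalEnvelopingAlgebra ℂ A) :
    u * θA w - θA (LamL A N hcompl η u w) ∈ whittakerIdeal L N η := by
  let T : Subalgebra ℂ (UniversalEnvelopingAlgebra ℂ L) :=
    { carrier := {u | ∀ w : UniversalEnvelopingAlgebra ℂ A,
        u * θA w - θA (LamL A N hcompl η u w) ∈ whittakerIdeal L N η}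
      algebraMap_mem' := fun c w => by
        rw [AlgHom.commutes, Module.algebraMap_end_apply, map_smul, Algebra.smul_def, sub_self]
        exact (whittakerIdeal L N η).zero_mem
      add_mem' := fun {u v} hu hv w => by
        have := (whittakerIdeal L N η).add_mem (hu w) (hv w)
        rw [show u * θA w - θA (LamL A N hcompl η u w)
            + (v * θA w - θA (LamL A N hcompl η v w))
            = (u + v) * θA w - θA (LamL A N hcompl η (u + v) w) from by
          simp only [map_add, add_mul, LinearMap.add_apply]; abel] at this
        exact this
      mul_mem' := fun {u v} hu hv w => by
        have h1 := mul_ideal_mem N η u _ (hv w)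
        rw [mul_sub] at h1
        have h2 := hu (LamL A N hcompl η v w)
        have := (whittakerIdeal L N η).add_mem h1 h2
        rw [show u * (v * θA w) - u * θA (LamL A N hcompl η v w)
            + (u * θA (LamL A N hcompl η v w)
              - θA (LamL A N hcompl η u (LamL A N hcompl η v w)))
            = (u * v) * θA w - θA (LamL A N hcompl η (u * v) w) from by
          rw [map_mul, Module.End.mul_apply, mul_assoc]; abel] at this
        exact this }
  have hι : ∀ x : L, ι ℂ x ∈ T := by
    intro x w
    show ι ℂ x * θA w - θA (LamL A N hcompl η (ι ℂ x) w) ∈ whittakerIdeal L N η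
    have hx : ι ℂ x = ι ℂ ((pA A N hcompl x : A) : L) + ι ℂ ((pN A N hcompl x : N) : L) := by
      rw [← map_add, pA_add_pN]
    rw [show ι ℂ x * θA w - θA (LamL A N hcompl η (ι ℂ x) w)
        = ι ℂ ((pN A N hcompl x : N) : L) * θA w
          - θA (Rop A N hcompl η (pN A N hcompl x) w) from by
      rw [LamL_iota, rhoL_apply, map_add, map_mul, theta_iota A θA hθA, hx]
      noncomm_ring]
    exact intertwine A N hcompl η θA hθA w (pN A N hcompl x)
  exact mem_of_forall_iota T hι u w

end Rep

end WhittakerAux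

open WhittakerAux in
/-- If `𝔤 = 𝔞 ⊕ 𝔫` is an internal direct sum of subspaces with `𝔞, 𝔫` Lie subalgebras,
then the composite `ℂ`-linear map `U(𝔞) → M_η`, `u ↦ [θ_𝔞(u)]`, is a linear isomorphism
(in particular bijective), where `θ_𝔞 : U(𝔞) → U(𝔤)` is induced by the inclusion. -/
theorem stmt_3 (L : Type*) [LieRing L] [LieAlgebra ℂ L]
    (A N : LieSubalgebra ℂ L) (η : N →ₗ⁅ℂ⁆ ℂ)
    (hcompl : IsCompl A.toSubmodule N.toSubmodule)
    (θA : UniversalEnvelopingAlgebra ℂ A →ₐ[ℂ] UniversalEnvelopingAlgebra ℂ L)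
    (hθA : θA = UniversalEnvelopingAlgebra.lift ℂ ((ι ℂ).comp A.incl)) :
    Function.Bijective (fun u : UniversalEnvelopingAlgebra ℂ A =>
      (Submodule.Quotient.mk (θA u) :
        UniversalEnvelopingAlgebra ℂ L ⧸ whittakerIdeal L N η)) := by
  constructor
  · intro u v huv
    have h : Submodule.Quotient.mk (p := whittakerIdeal L N η) (θA u)
        = Submodule.Quotient.mk (θA v) := huv
    rw [Submodule.Quotient.eq] at h
    have h0 := Psi_ideal A N hcompl η _ h
    rw [map_sub, LinearMap.sub_apply, Psi_theta A N hcompl η θA hθA,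
      Psi_theta A N hcompl η θA hθA] at h0
    exact sub_eq_zero.mp h0
  · intro q
    obtain ⟨u, rfl⟩ := Submodule.Quotient.mk_surjective _ q
    refine ⟨LamL A N hcompl η u 1, ?_⟩
    show Submodule.Quotient.mk _ = _
    rw [Submodule.Quotient.eq]
    have := surj_key A N hcompl η θA hθA u 1
    rw [map_one, mul_one] at this
    have h2 := (whittakerIdeal L N η).neg_mem this
    rw [neg_sub] at h2
    exact h2
end

section
/- Let M_0 be the standard Whittaker module associated to the zero homomorphism 0 : 𝔫⁺ → ℂ, i.e., the quotient of U(𝔤) by the left ideal generated by {ι(x) : x ∈ 𝔫⁺}. Then for every nonconstant polynomial p ∈ ℂ[X], the cyclic submodule U(𝔤)·[p(ι(d))] is a nonzero proper submodule of M_0. In particular, M_0 is not a simple U(𝔤)-module. -/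
open scoped DirectSum
open Polynomial
set_option maxHeartbeats 1000000
set_option synthInstance.maxHeartbeats 400000
namespace Stmt6Aux
section PART1


variable {L : Type*} [LieRing L] [LieAlgebra ℂ L]

/-- negative part -/
def Nsub (g : ℤ → Submodule ℂ L) : Submodule ℂ L := ⨆ i : {n : ℤ // n < 0}, g i.1
/-- positive part -/
def Psub (g : ℤ → Submodule ℂ L) : Submodule ℂ L := ⨆ i : {n : ℤ // 0 < n}, g i.1

lemma mem_Nsub_of (g : ℤ → Submodule ℂ L) {n : ℤ} (hn : n < 0) {x : L} (hx : x ∈ g n) :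
    x ∈ Nsub g :=
  (le_iSup (fun i : {n : ℤ // n < 0} => g i.1) ⟨n, hn⟩) hx

lemma mem_Psub_of (g : ℤ → Submodule ℂ L) {n : ℤ} (hn : 0 < n) {x : L} (hx : x ∈ g n) :
    x ∈ Psub g :=
  (le_iSup (fun i : {n : ℤ // 0 < n} => g i.1) ⟨n, hn⟩) hx

/-- the equivalence with the direct sum -/
noncomputable def eqv (g : ℤ → Submodule ℂ L) (hInt : DirectSum.IsInternal g) :
    (⨁ (n : ℤ), ↥(g n)) ≃ₗ[ℂ] L :=
  LinearEquiv.ofBijective (DirectSum.coeLinearMap g) hInt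

/-- partial sum map -/
noncomputable def Fpart (g : ℤ → Submodule ℂ L) (P : ℤ → Prop) [DecidablePred P] :
    (⨁ (n : ℤ), ↥(g n)) →ₗ[ℂ] L :=
  DirectSum.toModule ℂ ℤ L fun n => if P n then (g n).subtype else 0

/-- projection onto the part where `P` holds -/
noncomputable def projP (g : ℤ → Submodule ℂ L) (hInt : DirectSum.IsInternal g)
    (P : ℤ → Prop) [DecidablePred P] : L →ₗ[ℂ] L :=
  Fpart g P ∘ₗ (eqv g hInt).symm.toLinearMap

variable (g : ℤ → Submodule ℂ L) (hInt : DirectSum.IsInternal g)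

lemma eqv_symm_of_mem {n : ℤ} {x : L} (hx : x ∈ g n) :
    (eqv g hInt).symm x = DirectSum.of (fun i => ↥(g i)) n ⟨x, hx⟩ := by
  apply (eqv g hInt).injective
  rw [LinearEquiv.apply_symm_apply]
  rw [show (eqv g hInt) (DirectSum.of (fun i => ↥(g i)) n ⟨x, hx⟩)
      = DirectSum.coeLinearMap g (DirectSum.of (fun i => ↥(g i)) n ⟨x, hx⟩) from rfl]
  rw [DirectSum.coeLinearMap_of]

lemma Fpart_of (P : ℤ → Prop) [DecidablePred P] {n : ℤ} (y : ↥(g n)) :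
    Fpart g P (DirectSum.of (fun i => ↥(g i)) n y) = if P n then (y : L) else 0 := by
  rw [← DirectSum.lof_eq_of ℂ]
  rw [show Fpart g P = DirectSum.toModule ℂ ℤ L (fun n => if P n then (g n).subtype else 0)
      from rfl]
  rw [DirectSum.toModule_lof]
  by_cases h : P n <;> simp [h]

lemma projP_apply (P : ℤ → Prop) [DecidablePred P] (x : L) :
    projP g hInt P x = Fpart g P ((eqv g hInt).symm x) := rfl

lemma projP_of_mem (P : ℤ → Prop) [DecidablePred P] {n : ℤ} {x : L} (hx : x ∈ g n) :
    projP g hInt P x = if P n then x else 0 := by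
  rw [projP_apply, eqv_symm_of_mem g hInt hx, Fpart_of]

lemma projP_add_eq (x : L) :
    projP g hInt (· < 0) x + projP g hInt (· = 0) x + projP g hInt (0 < ·) x = x := by
  have key : Fpart g (· < 0) + Fpart g (· = 0) + Fpart g (0 < ·)
      = DirectSum.coeLinearMap g := by
    apply DirectSum.linearMap_ext
    intro n
    ext y
    simp only [LinearMap.comp_apply, LinearMap.add_apply, DirectSum.lof_eq_of,
      Fpart_of, DirectSum.coeLinearMap_of]
    rcases lt_trichotomy n 0 with h | h | h
    · simp [h, h.ne, not_lt.mpr h.le]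
    · simp [h]
    · simp [h, h.ne', not_lt.mpr h.le]
  have h2 := congrArg (fun (f : (⨁ (n : ℤ), ↥(g n)) →ₗ[ℂ] L) => f ((eqv g hInt).symm x)) key
  simp only [LinearMap.add_apply] at h2
  calc projP g hInt (· < 0) x + projP g hInt (· = 0) x + projP g hInt (0 < ·) x
      = DirectSum.coeLinearMap g ((eqv g hInt).symm x) := h2
    _ = eqv g hInt ((eqv g hInt).symm x) := rfl
    _ = x := (eqv g hInt).apply_symm_apply x

lemma projP_neg_mem (x : L) : projP g hInt (· < 0) x ∈ Nsub g := by
  rw [projP_apply]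
  induction (eqv g hInt).symm x using DirectSum.induction_on with
  | zero => simp
  | of n y =>
      rw [Fpart_of]
      by_cases h : n < 0
      · simpa [h] using mem_Nsub_of g h y.2
      · simp [h]
  | add a b ha hb => rw [map_add]; exact add_mem ha hb

lemma projP_pos_mem (x : L) : projP g hInt (0 < ·) x ∈ Psub g := by
  rw [projP_apply]
  induction (eqv g hInt).symm x using DirectSum.induction_on with
  | zero => simp
  | of n y =>
      rw [Fpart_of]
      by_cases h : 0 < n
      · simpa [h] using mem_Psub_of g h y.2
      · simp [h]
  | add a b ha hb => rw [map_add]; exact add_mem ha hb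

lemma projP_zero_mem (x : L) : projP g hInt (· = 0) x ∈ g 0 := by
  rw [projP_apply]
  induction (eqv g hInt).symm x using DirectSum.induction_on with
  | zero => simp
  | of n y =>
      rw [Fpart_of]
      by_cases h : n = 0
      · subst h; simpa using y.2
      · simp [h]
  | add a b ha hb => rw [map_add]; exact add_mem ha hb


end PART1

/-- Bundled data for the graded Lie algebra situation. -/
structure Ctx (L : Type*) [LieRing L] [LieAlgebra ℂ L] where
  g : ℤ → Submodule ℂ L
  hInt : DirectSum.IsInternal g
  d : L
  hd : d ≠ 0
  hd0 : g 0 = Submodule.span ℂ {d}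
  hBrk : ∀ m n : ℤ, ∀ x ∈ g m, ∀ y ∈ g n, ⁅x, y⁆ ∈ g (m + n)
  hdx : ∀ n : ℤ, ∀ x ∈ g n, ⁅d, x⁆ = (n : ℂ) • x

namespace Ctx

variable {L : Type*} [LieRing L] [LieAlgebra ℂ L] (C : Ctx L)

/-- the negative subspace -/
def N : Submodule ℂ L := Nsub C.g
/-- the positive subspace -/
def P : Submodule ℂ L := Psub C.g

/-- projection to the negative part, into L -/
noncomputable def pnegL : L →ₗ[ℂ] L := projP C.g C.hInt (· < 0)
/-- projection to the positive part, into L -/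
noncomputable def pposL : L →ₗ[ℂ] L := projP C.g C.hInt (0 < ·)
/-- projection to the zero part, into L -/
noncomputable def pzeroL : L →ₗ[ℂ] L := projP C.g C.hInt (· = 0)

/-- projection to the negative part -/
noncomputable def pneg : L →ₗ[ℂ] ↥C.N :=
  LinearMap.codRestrict C.N C.pnegL fun x => projP_neg_mem C.g C.hInt x

@[simp] lemma pneg_coe (x : L) : ((C.pneg x : L)) = C.pnegL x := rfl

lemma d_mem_g0 : C.d ∈ C.g 0 := by
  rw [C.hd0]; exact Submodule.mem_span_singleton_self C.d

/-- the coefficient of `d` -/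
noncomputable def cd : L →ₗ[ℂ] ℂ :=
  (LinearEquiv.toSpanNonzeroSingleton ℂ L C.d C.hd).symm.toLinearMap ∘ₗ
    LinearMap.codRestrict (Submodule.span ℂ {C.d}) C.pzeroL
      (fun x => C.hd0 ▸ projP_zero_mem C.g C.hInt x)

lemma pzeroL_eq_cd_smul (x : L) : C.pzeroL x = C.cd x • C.d := by
  have h : (LinearEquiv.toSpanNonzeroSingleton ℂ L C.d C.hd) (C.cd x)
      = LinearMap.codRestrict (Submodule.span ℂ {C.d}) C.pzeroL
          (fun x => C.hd0 ▸ projP_zero_mem C.g C.hInt x) x :=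
    (LinearEquiv.toSpanNonzeroSingleton ℂ L C.d C.hd).apply_symm_apply _
  have h2 := congrArg (fun z : ↥(Submodule.span ℂ {C.d}) => (z : L)) h
  simpa [LinearEquiv.toSpanNonzeroSingleton] using h2.symm

lemma decomp (x : L) : (C.pneg x : L) + C.cd x • C.d + C.pposL x = x := by
  rw [pneg_coe, ← C.pzeroL_eq_cd_smul]
  exact projP_add_eq C.g C.hInt x

lemma pposL_mem (x : L) : C.pposL x ∈ C.P := projP_pos_mem C.g C.hInt x

/- vanishing lemmas on homogeneous pieces -/
lemma pnegL_of_mem {n : ℤ} {x : L} (hx : x ∈ C.g n) :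
    C.pnegL x = if n < 0 then x else 0 := projP_of_mem C.g C.hInt _ hx
lemma pposL_of_mem {n : ℤ} {x : L} (hx : x ∈ C.g n) :
    C.pposL x = if 0 < n then x else 0 := projP_of_mem C.g C.hInt _ hx
lemma pzeroL_of_mem {n : ℤ} {x : L} (hx : x ∈ C.g n) :
    C.pzeroL x = if n = 0 then x else 0 := projP_of_mem C.g C.hInt _ hx

lemma pnegL_of_N {x : L} (hx : x ∈ C.N) : C.pnegL x = x := by
  induction hx using Submodule.iSup_induction' with
  | mem i x hx => rw [C.pnegL_of_mem hx, if_pos i.2]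
  | zero => simp
  | add x y hx hy ihx ihy => rw [map_add, ihx, ihy]

lemma cd_of_N {x : L} (hx : x ∈ C.N) : C.cd x = 0 := by
  have h : C.pzeroL x = 0 := by
    induction hx using Submodule.iSup_induction' with
    | mem i x hx => rw [C.pzeroL_of_mem hx, if_neg i.2.ne]
    | zero => simp
    | add x y hx hy ihx ihy => rw [map_add, ihx, ihy, add_zero]
  have := C.pzeroL_eq_cd_smul x
  rw [h] at this
  rcases smul_eq_zero.mp this.symm with h' | h'
  · exact h'
  · exact absurd h' C.hd

lemma pnegL_of_P {x : L} (hx : x ∈ C.P) : C.pnegL x = 0 := by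
  induction hx using Submodule.iSup_induction' with
  | mem i x hx => rw [C.pnegL_of_mem hx, if_neg (not_lt.mpr i.2.le)]
  | zero => simp
  | add x y hx hy ihx ihy => rw [map_add, ihx, ihy, add_zero]

lemma cd_of_P {x : L} (hx : x ∈ C.P) : C.cd x = 0 := by
  have h : C.pzeroL x = 0 := by
    induction hx using Submodule.iSup_induction' with
    | mem i x hx => rw [C.pzeroL_of_mem hx, if_neg i.2.ne']
    | zero => simp
    | add x y hx hy ihx ihy => rw [map_add, ihx, ihy, add_zero]
  have := C.pzeroL_eq_cd_smul x
  rw [h] at this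
  rcases smul_eq_zero.mp this.symm with h' | h'
  · exact h'
  · exact absurd h' C.hd

lemma pnegL_d : C.pnegL C.d = 0 := by
  rw [C.pnegL_of_mem C.d_mem_g0]; simp

lemma pposL_d : C.pposL C.d = 0 := by
  rw [C.pposL_of_mem C.d_mem_g0]; simp

lemma cd_d : C.cd C.d = 1 := by
  have h0 : C.pzeroL C.d = C.d := by rw [C.pzeroL_of_mem C.d_mem_g0]; simp
  have := C.pzeroL_eq_cd_smul C.d
  rw [h0] at this
  have h1 : (C.cd C.d - 1) • C.d = 0 := by
    rw [sub_smul, one_smul, ← this]; abel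
  rcases smul_eq_zero.mp h1 with h' | h'
  · exact sub_eq_zero.mp h'
  · exact absurd h' C.hd

/- bracket stability -/
lemma lie_mem_N {a b : L} (ha : a ∈ C.N) (hb : b ∈ C.N) : ⁅a, b⁆ ∈ C.N := by
  induction ha using Submodule.iSup_induction' with
  | mem i x hx =>
      induction hb using Submodule.iSup_induction' with
      | mem j y hy => exact mem_Nsub_of C.g (by omega : (i:ℤ)+(j:ℤ) < 0) (C.hBrk i j x hx y hy)
      | zero => simp
      | add y z hy hz ihy ihz => rw [lie_add]; exact add_mem ihy ihz
  | zero => simp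
  | add x y hx hy ihx ihy => rw [add_lie]; exact add_mem ihx ihy

lemma lie_mem_P {a b : L} (ha : a ∈ C.P) (hb : b ∈ C.P) : ⁅a, b⁆ ∈ C.P := by
  induction ha using Submodule.iSup_induction' with
  | mem i x hx =>
      induction hb using Submodule.iSup_induction' with
      | mem j y hy => exact mem_Psub_of C.g (by omega : (0:ℤ) < (i:ℤ)+(j:ℤ)) (C.hBrk i j x hx y hy)
      | zero => simp
      | add y z hy hz ihy ihz => rw [lie_add]; exact add_mem ihy ihz
  | zero => simp
  | add x y hx hy ihx ihy => rw [add_lie]; exact add_mem ihx ihy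

lemma lie_d_mem_N {a : L} (ha : a ∈ C.N) : ⁅C.d, a⁆ ∈ C.N := by
  induction ha using Submodule.iSup_induction' with
  | mem i x hx =>
      rw [C.hdx i x hx]
      exact Submodule.smul_mem _ _ (mem_Nsub_of C.g i.2 hx)
  | zero => simp
  | add x y hx hy ihx ihy => rw [lie_add]; exact add_mem ihx ihy

lemma lie_d_mem_P {a : L} (ha : a ∈ C.P) : ⁅C.d, a⁆ ∈ C.P := by
  induction ha using Submodule.iSup_induction' with
  | mem i x hx =>
      rw [C.hdx i x hx]
      exact Submodule.smul_mem _ _ (mem_Psub_of C.g i.2 hx)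
  | zero => simp
  | add x y hx hy ihx ihy => rw [lie_add]; exact add_mem ihx ihy

/-- `ad d` on the negative part -/
noncomputable def δ : ↥C.N →ₗ[ℂ] ↥C.N where
  toFun y := ⟨⁅C.d, (y : L)⁆, C.lie_d_mem_N y.2⟩
  map_add' y z := by ext; simp [lie_add]
  map_smul' c y := by ext; simp [lie_smul]

@[simp] lemma δ_coe (y : ↥C.N) : ((C.δ y : L)) = ⁅C.d, (y : L)⁆ := rfl

/-- the bracket on the negative part -/
noncomputable def β : ↥C.N →ₗ[ℂ] ↥C.N →ₗ[ℂ] ↥C.N :=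
  LinearMap.mk₂ ℂ (fun u v => ⟨⁅(u : L), (v : L)⁆, C.lie_mem_N u.2 v.2⟩)
    (fun u u' v => by ext; simp [add_lie]) (fun c u v => by ext; simp [smul_lie])
    (fun u v v' => by ext; simp [lie_add]) (fun c u v => by ext; simp [lie_smul])

@[simp] lemma β_coe (u v : ↥C.N) : ((C.β u v : L)) = ⁅(u : L), (v : L)⁆ := rfl

/-- key: the bracket of the non-negative parts is positive -/
lemma rest_lie_rest_mem_P (x y : L) :
    ⁅x - (C.pneg x : L), y - (C.pneg y : L)⁆ ∈ C.P := by
  have hx : x - (C.pneg x : L) = C.cd x • C.d + C.pposL x := by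
    have h := C.decomp x
    rw [sub_eq_iff_eq_add']
    conv_lhs => rw [← h]
    abel
  have hy : y - (C.pneg y : L) = C.cd y • C.d + C.pposL y := by
    have h := C.decomp y
    rw [sub_eq_iff_eq_add']
    conv_lhs => rw [← h]
    abel
  rw [hx, hy]
  have hdY : ⁅C.d, C.cd y • C.d + C.pposL y⁆ ∈ C.P := by
    rw [lie_add, lie_smul, lie_self, smul_zero, zero_add]
    exact C.lie_d_mem_P (C.pposL_mem y)
  have hpY : ⁅C.pposL x, C.cd y • C.d + C.pposL y⁆ ∈ C.P := by
    rw [lie_add, lie_smul]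
    refine add_mem (Submodule.smul_mem _ _ ?_) (C.lie_mem_P (C.pposL_mem x) (C.pposL_mem y))
    rw [← lie_skew]
    exact neg_mem (C.lie_d_mem_P (C.pposL_mem x))
  rw [add_lie, smul_lie]
  exact add_mem (Submodule.smul_mem _ _ hdY) hpY

end Ctx


variable {L : Type*} [LieRing L] [LieAlgebra ℂ L] (C : Ctx L)

namespace Ctx

/-- index type for a basis of the negative part -/
abbrev BIdx := ↥(Module.Basis.ofVectorSpaceIndex ℂ ↥C.N)

/-- chosen basis of the negative part -/
noncomputable def bas : Module.Basis C.BIdx ℂ ↥C.N := Module.Basis.ofVectorSpace ℂ ↥C.N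

/-- the underlying module of the universal Whittaker module: free `ℂ[X]`-module on words -/
abbrev W := List C.BIdx →₀ Polynomial ℂ

/-- base vector -/
noncomputable def sg (w : List C.BIdx) (q : ℂ[X]) : C.W := Finsupp.single w q

/-- prepend a letter -/
noncomputable def pre (i : C.BIdx) : C.W →ₗ[ℂ[X]] C.W :=
  Finsupp.lmapDomain ℂ[X] ℂ[X] (i :: ·)

/-- prepend a word -/
noncomputable def preL (ws : List C.BIdx) : C.W →ₗ[ℂ[X]] C.W :=
  Finsupp.lmapDomain ℂ[X] ℂ[X] (ws ++ ·)

@[simp] lemma pre_single (i : C.BIdx) (w : List C.BIdx) (q : ℂ[X]) :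
    C.pre i (C.sg w q) = C.sg (i :: w) q := by
  simp [pre, sg, Finsupp.mapDomain_single]

@[simp] lemma preL_single (ws w : List C.BIdx) (q : ℂ[X]) :
    C.preL ws (C.sg w q) = C.sg (ws ++ w) q := by
  simp [preL, sg, Finsupp.mapDomain_single]

/-- left multiplication by an element of the negative part -/
noncomputable def lmul : ↥C.N →ₗ[ℂ] C.W →ₗ[ℂ[X]] C.W :=
  (Finsupp.lsum ℂ fun i : C.BIdx =>
    LinearMap.toSpanSingleton ℂ (C.W →ₗ[ℂ[X]] C.W) (C.pre i)) ∘ₗ C.bas.repr.toLinearMap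

lemma lmul_apply (y : ↥C.N) (ξ : C.W) :
    C.lmul y ξ = (C.bas.repr y).sum fun i c => c • (C.pre i ξ) := by
  rw [lmul, LinearMap.comp_apply, LinearEquiv.coe_toLinearMap, Finsupp.lsum_apply,
    Finsupp.sum, Finsupp.sum, LinearMap.sum_apply]
  refine Finset.sum_congr rfl fun i _ => ?_
  rw [LinearMap.toSpanSingleton_apply, LinearMap.smul_apply]

@[simp] lemma lmul_bas (i : C.BIdx) : C.lmul (C.bas i) = C.pre i := by
  apply LinearMap.ext; intro ξ
  rw [lmul_apply, C.bas.repr_self, Finsupp.sum_single_index] <;> simp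

/-- raw recursive action on words (value at coefficient `1`) -/
noncomputable def awAux : List C.BIdx → L → C.W
  | [], x => C.lmul (C.pneg x) (C.sg [] 1) + C.cd x • C.sg [] X
  | i :: w, x =>
      C.lmul (C.pneg x) (C.sg (i :: w) 1)
      + C.cd x • (C.lmul (C.δ ↑i) (C.sg w 1))
      + awAux w ⁅C.pposL x, ((i : ↥C.N) : L)⁆
      + C.pre i (awAux w (x - (C.pneg x : L)))

lemma awAux_add (w : List C.BIdx) : ∀ x y : L,
    C.awAux w (x + y) = C.awAux w x + C.awAux w y := by
  induction w with
  | nil =>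
      intro x y
      show C.lmul (C.pneg (x + y)) (C.sg [] 1) + C.cd (x + y) • C.sg [] X
          = (C.lmul (C.pneg x) (C.sg [] 1) + C.cd x • C.sg [] X)
            + (C.lmul (C.pneg y) (C.sg [] 1) + C.cd y • C.sg [] X)
      simp only [map_add, LinearMap.add_apply, add_smul]
      abel
  | cons i w ih =>
      intro x y
      have h1 : (x + y) - (C.pneg (x + y) : L) = (x - (C.pneg x : L)) + (y - (C.pneg y : L)) := by
        rw [map_add]; push_cast; abel
      show C.lmul (C.pneg (x + y)) (C.sg (i :: w) 1)
          + C.cd (x + y) • (C.lmul (C.δ ↑i) (C.sg w 1))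
          + C.awAux w ⁅C.pposL (x + y), ((i : ↥C.N) : L)⁆
          + C.pre i (C.awAux w ((x + y) - (C.pneg (x + y) : L)))
          = _ + _
      rw [h1]
      simp only [map_add, LinearMap.add_apply, add_smul, add_lie, ih]
      show _ = (C.lmul (C.pneg x) (C.sg (i :: w) 1)
          + C.cd x • (C.lmul (C.δ ↑i) (C.sg w 1))
          + C.awAux w ⁅C.pposL x, ((i : ↥C.N) : L)⁆
          + C.pre i (C.awAux w (x - (C.pneg x : L))))
          + (C.lmul (C.pneg y) (C.sg (i :: w) 1)
          + C.cd y • (C.lmul (C.δ ↑i) (C.sg w 1))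
          + C.awAux w ⁅C.pposL y, ((i : ↥C.N) : L)⁆
          + C.pre i (C.awAux w (y - (C.pneg y : L))))
      abel

lemma awAux_smul (w : List C.BIdx) : ∀ (c : ℂ) (x : L),
    C.awAux w (c • x) = c • C.awAux w x := by
  induction w with
  | nil =>
      intro c x
      show C.lmul (C.pneg (c • x)) (C.sg [] 1) + C.cd (c • x) • C.sg [] X = _
      simp only [map_smul, LinearMap.smul_apply, smul_eq_mul, mul_smul]
      rw [← smul_add]
      rfl
  | cons i w ih =>
      intro c x
      have h1 : (c • x) - ((c • C.pneg x : ↥C.N) : L) = c • (x - (C.pneg x : L)) := by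
        push_cast; rw [smul_sub]
      show C.lmul (C.pneg (c • x)) (C.sg (i :: w) 1)
          + C.cd (c • x) • (C.lmul (C.δ ↑i) (C.sg w 1))
          + C.awAux w ⁅C.pposL (c • x), ((i : ↥C.N) : L)⁆
          + C.pre i (C.awAux w ((c • x) - (C.pneg (c • x) : L))) = _
      simp only [map_smul, LinearMap.smul_apply, smul_eq_mul, mul_smul, smul_lie, h1, ih,
        LinearMap.map_smul_of_tower]
      rw [← smul_add, ← smul_add, ← smul_add]
      rfl

lemma awAux_zero (w : List C.BIdx) : C.awAux w 0 = 0 := by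
  have := C.awAux_smul w 0 0
  simpa using this

/-- the action operator -/
noncomputable def Aop (x : L) : C.W →ₗ[ℂ[X]] C.W :=
  Finsupp.lsum ℂ[X] fun w => LinearMap.toSpanSingleton ℂ[X] C.W (C.awAux w x)

@[simp] lemma Aop_single (x : L) (w : List C.BIdx) (q : ℂ[X]) :
    C.Aop x (C.sg w q) = q • C.awAux w x := by
  simp [Aop, sg, LinearMap.toSpanSingleton, Finsupp.lsum_single]

lemma Aop_add (x y : L) : C.Aop (x + y) = C.Aop x + C.Aop y := by
  apply Finsupp.lhom_ext; intro w q
  show C.Aop (x+y) (C.sg w q) = (C.Aop x + C.Aop y) (C.sg w q)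
  simp [awAux_add, smul_add]

lemma Aop_smul (c : ℂ) (x : L) : C.Aop (c • x) = c • C.Aop x := by
  apply Finsupp.lhom_ext; intro w q
  show C.Aop (c • x) (C.sg w q) = (c • C.Aop x) (C.sg w q)
  simp only [Aop_single, awAux_smul, LinearMap.smul_apply]
  rw [smul_comm]

@[simp] lemma Aop_zero : C.Aop 0 = 0 := by
  have := C.Aop_smul 0 0; simpa using this

lemma Aop_sub (x y : L) : C.Aop (x - y) = C.Aop x - C.Aop y := by
  have h := C.Aop_add (x - y) y
  rw [sub_add_cancel] at h
  rw [h]; abel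

end Ctx

variable {L : Type*} [LieRing L] [LieAlgebra ℂ L] (C : Ctx L)
namespace Ctx
open Polynomial

lemma sg_smul (w : List C.BIdx) (q : ℂ[X]) : C.sg w q = q • C.sg w 1 := by
  simp [sg, Finsupp.smul_single]

lemma pneg_of_N (y : ↥C.N) : C.pneg ((y : L)) = y :=
  Subtype.ext (C.pnegL_of_N y.2)

lemma pposL_of_N {x : L} (hx : x ∈ C.N) : C.pposL x = 0 := by
  have h := C.decomp x
  rw [pneg_coe, C.pnegL_of_N hx, C.cd_of_N hx, zero_smul, add_zero] at h
  exact add_eq_left.mp h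

lemma pneg_of_P {x : L} (hx : x ∈ C.P) : C.pneg x = 0 :=
  Subtype.ext (C.pnegL_of_P hx)

lemma pneg_d : C.pneg C.d = 0 := Subtype.ext (by rw [pneg_coe, C.pnegL_d]; rfl)

/-- the fundamental recursion, as an operator identity (basis letters) -/
lemma Aop_pre (x : L) (i : C.BIdx) :
    C.Aop x ∘ₗ C.pre i = C.lmul (C.pneg x) ∘ₗ C.pre i + C.cd x • C.lmul (C.δ ↑i)
      + C.Aop ⁅C.pposL x, ((i : ↥C.N) : L)⁆ + C.pre i ∘ₗ C.Aop (x - (C.pneg x : L)) := by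
  apply Finsupp.lhom_ext; intro w q
  show C.Aop x (C.pre i (C.sg w q)) = C.lmul (C.pneg x) (C.pre i (C.sg w q))
      + (C.cd x • C.lmul (C.δ ↑i)) (C.sg w q)
      + C.Aop ⁅C.pposL x, ((i : ↥C.N) : L)⁆ (C.sg w q)
      + C.pre i (C.Aop (x - (C.pneg x : L)) (C.sg w q))
  rw [pre_single, Aop_single, Aop_single, Aop_single, LinearMap.smul_apply]
  show q • C.awAux (i :: w) x = _
  rw [show C.awAux (i :: w) x = C.lmul (C.pneg x) (C.sg (i :: w) 1)
      + C.cd x • (C.lmul (C.δ ↑i) (C.sg w 1))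
      + C.awAux w ⁅C.pposL x, ((i : ↥C.N) : L)⁆
      + C.pre i (C.awAux w (x - (C.pneg x : L))) from rfl]
  rw [smul_add, smul_add, smul_add]
  congr 1
  · congr 1
    · congr 1
      · rw [← LinearMap.map_smul, ← sg_smul]
      · rw [smul_comm, ← LinearMap.map_smul, ← sg_smul]
  · rw [LinearMap.map_smul]

/-- postcomposition as a `ℂ`-linear map -/
noncomputable def postc (T : C.W →ₗ[ℂ[X]] C.W) :
    (C.W →ₗ[ℂ[X]] C.W) →ₗ[ℂ] (C.W →ₗ[ℂ[X]] C.W) where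
  toFun S := T ∘ₗ S
  map_add' S S' := by ext ξ; simp
  map_smul' c S := by ext ξ; simp [LinearMap.map_smul_of_tower]

/-- precomposition as a `ℂ`-linear map -/
noncomputable def prec (T : C.W →ₗ[ℂ[X]] C.W) :
    (C.W →ₗ[ℂ[X]] C.W) →ₗ[ℂ] (C.W →ₗ[ℂ[X]] C.W) where
  toFun S := S ∘ₗ T
  map_add' S S' := by ext ξ; simp
  map_smul' c S := by ext ξ; simp

/-- bracket with a fixed element, on the negative part -/
noncomputable def brx (z : L) : ↥C.N →ₗ[ℂ] L where
  toFun y := ⁅z, (y : L)⁆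
  map_add' y y' := by simp [lie_add]
  map_smul' c y := by simp [lie_smul]

/-- the action as a linear map -/
noncomputable def AL : L →ₗ[ℂ] (C.W →ₗ[ℂ[X]] C.W) where
  toFun := C.Aop
  map_add' := C.Aop_add
  map_smul' := C.Aop_smul

/-- the fundamental recursion for a general element of the negative part -/
lemma Aop_lmul (x : L) (y : ↥C.N) :
    C.Aop x ∘ₗ C.lmul y = C.lmul (C.pneg x) ∘ₗ C.lmul y + C.cd x • C.lmul (C.δ y)
      + C.Aop ⁅C.pposL x, (y : L)⁆ + C.lmul y ∘ₗ C.Aop (x - (C.pneg x : L)) := by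
  have hFG : C.postc (C.Aop x) ∘ₗ C.lmul
      = (C.postc (C.lmul (C.pneg x)) ∘ₗ C.lmul + C.cd x • (C.lmul ∘ₗ C.δ)
          + C.AL ∘ₗ C.brx (C.pposL x) + C.prec (C.Aop (x - (C.pneg x : L))) ∘ₗ C.lmul) := by
    apply C.bas.ext; intro i
    have hb : C.bas i = (i : ↥C.N) := Module.Basis.ofVectorSpace_apply_self ℂ (↥C.N) i
    show C.postc (C.Aop x) (C.lmul (C.bas i))
        = C.postc (C.lmul (C.pneg x)) (C.lmul (C.bas i)) + C.cd x • (C.lmul (C.δ (C.bas i)))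
          + C.AL (C.brx (C.pposL x) (C.bas i)) + C.prec (C.Aop (x - (C.pneg x : L))) (C.lmul (C.bas i))
    rw [C.lmul_bas, hb]
    exact C.Aop_pre x i
  have := LinearMap.congr_fun hFG y
  exact this

/-- the `ν` operators generating the relation submodule -/
noncomputable def nu (u v : ↥C.N) : C.W →ₗ[ℂ[X]] C.W :=
  C.lmul u ∘ₗ C.lmul v - C.lmul v ∘ₗ C.lmul u - C.lmul (C.β u v)

lemma Aop_of_N (y : ↥C.N) : C.Aop ((y : L)) = C.lmul y := by
  apply Finsupp.lhom_ext; intro w q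
  show C.Aop ((y : L)) (C.sg w q) = C.lmul y (C.sg w q)
  cases w with
  | nil =>
      rw [Aop_single]
      show q • (C.lmul (C.pneg ((y:L))) (C.sg [] 1) + C.cd ((y:L)) • C.sg [] X) = _
      rw [C.pneg_of_N y, C.cd_of_N y.2, zero_smul, add_zero, ← LinearMap.map_smul, ← sg_smul]
  | cons i w =>
      rw [Aop_single]
      show q • (C.lmul (C.pneg ((y:L))) (C.sg (i :: w) 1)
          + C.cd ((y:L)) • (C.lmul (C.δ ↑i) (C.sg w 1))
          + C.awAux w ⁅C.pposL ((y:L)), ((i : ↥C.N) : L)⁆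
          + C.pre i (C.awAux w (((y:L)) - (C.pneg ((y:L)) : L)))) = _
      rw [C.pneg_of_N y, C.cd_of_N y.2, C.pposL_of_N y.2, zero_smul, add_zero, zero_lie,
        awAux_zero, add_zero, sub_self, awAux_zero, map_zero, add_zero,
        ← LinearMap.map_smul, ← sg_smul]

/-- main commutation identity -/
lemma Aop_comm (x : L) (y : ↥C.N) :
    C.Aop x ∘ₗ C.lmul y = C.nu (C.pneg x) y + C.Aop ⁅x, (y : L)⁆ + C.lmul y ∘ₗ C.Aop x := by
  have hb : ⁅x, (y : L)⁆ = ((C.β (C.pneg x) y : L)) + C.cd x • ((C.δ y : L))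
      + ⁅C.pposL x, (y : L)⁆ := by
    conv_lhs => rw [← C.decomp x]
    rw [add_lie, add_lie, smul_lie, β_coe, δ_coe]
  have h2 : C.Aop ⁅x, (y : L)⁆ = C.lmul (C.β (C.pneg x) y) + C.cd x • C.lmul (C.δ y)
      + C.Aop ⁅C.pposL x, (y : L)⁆ := by
    rw [hb, Aop_add, Aop_add, Aop_smul, Aop_of_N, Aop_of_N]
  have h3 : C.Aop (x - (C.pneg x : L)) = C.Aop x - C.lmul (C.pneg x) := by
    rw [Aop_sub, Aop_of_N]
  rw [Aop_lmul, h2, h3, nu, LinearMap.comp_sub]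
  abel

end Ctx

variable {L : Type*} [LieRing L] [LieAlgebra ℂ L] (C : Ctx L)
namespace Ctx
open Polynomial

lemma nu_apply (u v : ↥C.N) (ξ : C.W) :
    C.nu u v ξ = C.lmul u (C.lmul v ξ) - C.lmul v (C.lmul u ξ) - C.lmul (C.β u v) ξ := by
  simp [nu]

/-- the relation submodule -/
noncomputable def Rel : Submodule ℂ[X] C.W :=
  Submodule.span ℂ[X]
    {z | ∃ (ws : List C.BIdx) (u v : ↥C.N) (ξ : C.W), z = C.preL ws (C.nu u v ξ)}

lemma preL_nil (θ : C.W) : C.preL [] θ = θ := by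
  have h : ((fun w => ([] : List C.BIdx) ++ w)) = id := funext fun w => rfl
  simp only [preL, Finsupp.lmapDomain_apply, h]
  exact Finsupp.mapDomain_id

lemma pre_preL (i : C.BIdx) (ws : List C.BIdx) (θ : C.W) :
    C.pre i (C.preL ws θ) = C.preL (i :: ws) θ := by
  simp only [pre, preL, Finsupp.lmapDomain_apply]
  rw [← Finsupp.mapDomain_comp]
  congr 1

lemma nu_mem (u v : ↥C.N) (ξ : C.W) : C.nu u v ξ ∈ C.Rel :=
  Submodule.subset_span ⟨[], u, v, ξ, (C.preL_nil _).symm⟩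

lemma pre_rel (i : C.BIdx) {z : C.W} (hz : z ∈ C.Rel) : C.pre i z ∈ C.Rel := by
  induction hz using Submodule.span_induction with
  | mem z hzz =>
      obtain ⟨ws, u, v, ξ, rfl⟩ := hzz
      rw [pre_preL]
      exact Submodule.subset_span ⟨i :: ws, u, v, ξ, rfl⟩
  | zero => rw [map_zero]; exact zero_mem _
  | add a b _ _ iha ihb => rw [map_add]; exact add_mem iha ihb
  | smul q a _ iha => rw [map_smul]; exact Submodule.smul_mem _ _ iha

lemma lmul_rel (y : ↥C.N) {z : C.W} (hz : z ∈ C.Rel) : C.lmul y z ∈ C.Rel := by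
  rw [lmul_apply]
  refine Submodule.sum_mem _ fun i _ => ?_
  exact Submodule.smul_of_tower_mem _ _ (C.pre_rel i hz)

/-- pointwise form of the commutation identity -/
lemma hcomm (x : L) (y : ↥C.N) (ξ : C.W) :
    C.Aop x (C.lmul y ξ)
      = C.nu (C.pneg x) y ξ + C.Aop ⁅x, (y : L)⁆ ξ + C.lmul y (C.Aop x ξ) := by
  have := LinearMap.congr_fun (C.Aop_comm x y) ξ
  simpa using this

lemma Aop_core (x : L) (u v : ↥C.N) (ξ : C.W) : C.Aop x (C.nu u v ξ) ∈ C.Rel := by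
  have hjac2 : ⁅⁅x, (u : L)⁆, (v : L)⁆ = ⁅⁅x, (v : L)⁆, (u : L)⁆ + ⁅x, ((C.β u v : L))⁆ := by
    rw [β_coe, lie_lie]
    have : ⁅(u:L), ⁅x, (v:L)⁆⁆ = -⁅⁅x, (v:L)⁆, (u:L)⁆ := (lie_skew _ _).symm
    rw [this]
    abel
  have e0 : C.Aop x (C.nu u v ξ) = C.Aop x (C.lmul u (C.lmul v ξ))
      - C.Aop x (C.lmul v (C.lmul u ξ)) - C.Aop x (C.lmul (C.β u v) ξ) := by
    rw [nu_apply, map_sub, map_sub]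
  have e1 : C.Aop x (C.lmul u (C.lmul v ξ))
      = C.nu (C.pneg x) u (C.lmul v ξ)
        + (C.nu (C.pneg ⁅x, (u:L)⁆) v ξ + C.Aop ⁅⁅x, (u:L)⁆, (v:L)⁆ ξ
            + C.lmul v (C.Aop ⁅x, (u:L)⁆ ξ))
        + (C.lmul u (C.nu (C.pneg x) v ξ) + C.lmul u (C.Aop ⁅x, (v:L)⁆ ξ)
            + C.lmul u (C.lmul v (C.Aop x ξ))) := by
    rw [C.hcomm x u, C.hcomm ⁅x, (u:L)⁆ v, C.hcomm x v, map_add, map_add]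
  have e2 : C.Aop x (C.lmul v (C.lmul u ξ))
      = C.nu (C.pneg x) v (C.lmul u ξ)
        + (C.nu (C.pneg ⁅x, (v:L)⁆) u ξ + C.Aop ⁅⁅x, (v:L)⁆, (u:L)⁆ ξ
            + C.lmul u (C.Aop ⁅x, (v:L)⁆ ξ))
        + (C.lmul v (C.nu (C.pneg x) u ξ) + C.lmul v (C.Aop ⁅x, (u:L)⁆ ξ)
            + C.lmul v (C.lmul u (C.Aop x ξ))) := by
    rw [C.hcomm x v, C.hcomm ⁅x, (v:L)⁆ u, C.hcomm x u, map_add, map_add]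
  have e3 : C.Aop x (C.lmul (C.β u v) ξ)
      = C.nu (C.pneg x) (C.β u v) ξ + C.Aop ⁅x, ((C.β u v : L))⁆ ξ
        + C.lmul (C.β u v) (C.Aop x ξ) := C.hcomm x (C.β u v) ξ
  have e4 : C.Aop ⁅⁅x, (u:L)⁆, (v:L)⁆ ξ
      = C.Aop ⁅⁅x, (v:L)⁆, (u:L)⁆ ξ + C.Aop ⁅x, ((C.β u v : L))⁆ ξ := by
    rw [hjac2, C.Aop_add, LinearMap.add_apply]
  have key : C.Aop x (C.nu u v ξ)
      = (C.nu (C.pneg x) u (C.lmul v ξ) + C.nu (C.pneg ⁅x, (u:L)⁆) v ξ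
          + C.lmul u (C.nu (C.pneg x) v ξ))
        - (C.nu (C.pneg x) v (C.lmul u ξ) + C.nu (C.pneg ⁅x, (v:L)⁆) u ξ
          + C.lmul v (C.nu (C.pneg x) u ξ))
        - C.nu (C.pneg x) (C.β u v) ξ + C.nu u v (C.Aop x ξ) := by
    rw [e0, e1, e2, e3, e4, C.nu_apply u v (C.Aop x ξ)]
    abel
  rw [key]
  refine add_mem (sub_mem (sub_mem (add_mem (add_mem ?_ ?_) ?_) (add_mem (add_mem ?_ ?_) ?_)) ?_) ?_
  · exact C.nu_mem _ _ _
  · exact C.nu_mem _ _ _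
  · exact C.lmul_rel _ (C.nu_mem _ _ _)
  · exact C.nu_mem _ _ _
  · exact C.nu_mem _ _ _
  · exact C.lmul_rel _ (C.nu_mem _ _ _)
  · exact C.nu_mem _ _ _
  · exact C.nu_mem _ _ _

lemma Aop_rel : ∀ (x : L) {z : C.W}, z ∈ C.Rel → C.Aop x z ∈ C.Rel := by
  have gen : ∀ (ws : List C.BIdx) (x : L) (u v : ↥C.N) (ξ : C.W),
      C.Aop x (C.preL ws (C.nu u v ξ)) ∈ C.Rel := by
    intro ws
    induction ws with
    | nil => intro x u v ξ; rw [preL_nil]; exact C.Aop_core x u v ξ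
    | cons i ws ih =>
        intro x u v ξ
        rw [← pre_preL]
        have h := LinearMap.congr_fun (C.Aop_pre x i) (C.preL ws (C.nu u v ξ))
        simp only [LinearMap.comp_apply, LinearMap.add_apply, LinearMap.smul_apply] at h
        rw [h]
        have hgen : C.preL ws (C.nu u v ξ) ∈ C.Rel :=
          Submodule.subset_span ⟨ws, u, v, ξ, rfl⟩
        refine add_mem (add_mem (add_mem ?_ ?_) ?_) ?_
        · exact C.lmul_rel _ (C.pre_rel i hgen)
        · exact Submodule.smul_of_tower_mem _ _ (C.lmul_rel _ hgen)
        · exact ih _ _ _ _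
        · exact C.pre_rel i (ih _ _ _ _)
  intro x z hz
  induction hz using Submodule.span_induction with
  | mem z hzz => obtain ⟨ws, u, v, ξ, rfl⟩ := hzz; exact gen ws x u v ξ
  | zero => rw [map_zero]; exact zero_mem _
  | add a b _ _ iha ihb => rw [map_add]; exact add_mem iha ihb
  | smul q a _ iha => rw [map_smul]; exact Submodule.smul_mem _ _ iha

end Ctx

variable {L : Type*} [LieRing L] [LieAlgebra ℂ L] (C : Ctx L)
namespace Ctx
open Polynomial

lemma Aop_sg1 (z : L) :
    C.Aop z (C.sg [] 1) = C.lmul (C.pneg z) (C.sg [] 1) + C.cd z • C.sg [] X := by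
  rw [Aop_single, one_smul]; rfl

lemma Aop_sgX (z : L) :
    C.Aop z (C.sg [] X) = (X : ℂ[X]) • C.lmul (C.pneg z) (C.sg [] 1) + C.cd z • ((X : ℂ[X]) • C.sg [] X) := by
  rw [Aop_single]
  rw [show C.awAux [] z = C.lmul (C.pneg z) (C.sg [] 1) + C.cd z • C.sg [] X from rfl]
  rw [smul_add, smul_comm]

lemma lmul_sgX (y : ↥C.N) : C.lmul y (C.sg [] X) = (X : ℂ[X]) • C.lmul y (C.sg [] 1) := by
  rw [show C.sg [] X = X • C.sg [] 1 from C.sg_smul [] X, map_smul]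

lemma lie_base (x y : L) :
    C.Aop ⁅x, y⁆ (C.sg [] 1) - C.Aop x (C.Aop y (C.sg [] 1)) + C.Aop y (C.Aop x (C.sg [] 1))
      = - C.nu (C.pneg x) (C.pneg y) (C.sg [] 1) := by
  have hP : ⁅x - (C.pneg x : L), y - (C.pneg y : L)⁆ ∈ C.P := C.rest_lie_rest_mem_P x y
  have hbr : ⁅x, y⁆ = ⁅x - (C.pneg x : L), y - (C.pneg y : L)⁆ + ⁅x, (C.pneg y : L)⁆
      + ⁅(C.pneg x : L), y⁆ - ⁅(C.pneg x : L), (C.pneg y : L)⁆ := by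
    rw [sub_lie, lie_sub, lie_sub]; abel
  have hab : ⁅(C.pneg x : L), (C.pneg y : L)⁆ = ((C.β (C.pneg x) (C.pneg y) : L)) :=
    (C.β_coe _ _).symm
  have hpneg : C.pneg ⁅x, y⁆ = C.pneg ⁅x, (C.pneg y : L)⁆ + C.pneg ⁅(C.pneg x : L), y⁆
      - C.β (C.pneg x) (C.pneg y) := by
    rw [hbr, map_sub, map_add, map_add, C.pneg_of_P hP, hab, C.pneg_of_N]
    abel
  have hcd : C.cd ⁅x, y⁆ = C.cd ⁅x, (C.pneg y : L)⁆ + C.cd ⁅(C.pneg x : L), y⁆ := by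
    rw [hbr, map_sub, map_add, map_add, C.cd_of_P hP, hab, C.cd_of_N (C.β _ _).2]
    abel
  have hyx : ⁅y, (C.pneg x : L)⁆ = -⁅(C.pneg x : L), y⁆ := by rw [← lie_skew]
  simp only [C.Aop_sg1, map_add, LinearMap.map_smul_of_tower, C.hcomm, C.Aop_sgX,
    C.lmul_sgX, map_smul, hyx, map_neg, hpneg, hcd]
  simp only [nu_apply, map_add, map_sub, map_neg, add_smul, smul_add, smul_neg, smul_smul,
    LinearMap.sub_apply, LinearMap.add_apply, LinearMap.neg_apply]
  rw [show C.β (C.pneg y) (C.pneg x) = - C.β (C.pneg x) (C.pneg y) from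
    Subtype.ext (by rw [β_coe]; rw [← lie_skew]; simp)]
  simp only [map_neg, LinearMap.neg_apply, smul_neg, neg_neg, neg_smul]
  rw [mul_comm (C.cd y) (C.cd x)]
  abel
end Ctx

variable {L : Type*} [LieRing L] [LieAlgebra ℂ L] (C : Ctx L)
namespace Ctx
open Polynomial

lemma lmul_up (i : C.BIdx) : C.lmul ((i : ↥C.N)) = C.pre i := by
  rw [← Module.Basis.ofVectorSpace_apply_self ℂ (↥C.N) i]
  exact C.lmul_bas i

lemma lie_step : ∀ (w : List C.BIdx) (x y : L),
    C.Aop ⁅x, y⁆ (C.sg w 1) - C.Aop x (C.Aop y (C.sg w 1)) + C.Aop y (C.Aop x (C.sg w 1))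
      ∈ C.Rel := by
  intro w
  induction w with
  | nil =>
      intro x y
      rw [C.lie_base x y]
      exact neg_mem (C.nu_mem _ _ _)
  | cons i w ih =>
      intro x y
      have hsg : C.sg (i :: w) 1 = C.lmul ((i : ↥C.N)) (C.sg w 1) := by
        rw [C.lmul_up, pre_single]
      have key : C.Aop ⁅x, y⁆ (C.sg (i :: w) 1) - C.Aop x (C.Aop y (C.sg (i :: w) 1))
            + C.Aop y (C.Aop x (C.sg (i :: w) 1))
          = (C.Aop ⁅x, ⁅y, ((i : ↥C.N) : L)⁆⁆ (C.sg w 1)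
              - C.Aop x (C.Aop ⁅y, ((i : ↥C.N) : L)⁆ (C.sg w 1))
              + C.Aop ⁅y, ((i : ↥C.N) : L)⁆ (C.Aop x (C.sg w 1)))
            - (C.Aop ⁅y, ⁅x, ((i : ↥C.N) : L)⁆⁆ (C.sg w 1)
              - C.Aop y (C.Aop ⁅x, ((i : ↥C.N) : L)⁆ (C.sg w 1))
              + C.Aop ⁅x, ((i : ↥C.N) : L)⁆ (C.Aop y (C.sg w 1)))
            + C.lmul ((i : ↥C.N)) (C.Aop ⁅x, y⁆ (C.sg w 1) - C.Aop x (C.Aop y (C.sg w 1))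
              + C.Aop y (C.Aop x (C.sg w 1)))
            + C.nu (C.pneg ⁅x, y⁆) ((i : ↥C.N)) (C.sg w 1)
            - C.Aop x (C.nu (C.pneg y) ((i : ↥C.N)) (C.sg w 1))
            + C.Aop y (C.nu (C.pneg x) ((i : ↥C.N)) (C.sg w 1))
            - C.nu (C.pneg x) ((i : ↥C.N)) (C.Aop y (C.sg w 1))
            + C.nu (C.pneg y) ((i : ↥C.N)) (C.Aop x (C.sg w 1)) := by
        rw [hsg, C.hcomm ⁅x, y⁆ ((i : ↥C.N)) (C.sg w 1), C.hcomm y ((i : ↥C.N)) (C.sg w 1),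
          C.hcomm x ((i : ↥C.N)) (C.sg w 1), map_add, map_add, map_add, map_add,
          C.hcomm x ((i : ↥C.N)) (C.Aop y (C.sg w 1)),
          C.hcomm y ((i : ↥C.N)) (C.Aop x (C.sg w 1)),
          lie_lie, C.Aop_sub, LinearMap.sub_apply, map_add, map_sub]
        abel
      rw [key]
      refine add_mem (sub_mem (add_mem (sub_mem (add_mem (add_mem (sub_mem ?_ ?_) ?_) ?_) ?_) ?_) ?_) ?_
      · exact ih x ⁅y, ((i : ↥C.N) : L)⁆
      · exact ih y ⁅x, ((i : ↥C.N) : L)⁆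
      · exact C.lmul_rel _ (ih x y)
      · exact C.nu_mem _ _ _
      · exact C.Aop_rel x (C.nu_mem _ _ _)
      · exact C.Aop_rel y (C.nu_mem _ _ _)
      · exact C.nu_mem _ _ _
      · exact C.nu_mem _ _ _

lemma lie_full (x y : L) (ξ : C.W) :
    C.Aop ⁅x, y⁆ ξ - C.Aop x (C.Aop y ξ) + C.Aop y (C.Aop x ξ) ∈ C.Rel := by
  induction ξ using Finsupp.induction with
  | zero => simp only [map_zero, sub_zero, add_zero]; exact zero_mem _
  | single_add w q f hwf hq ih =>
      have hsplit : C.Aop ⁅x, y⁆ (Finsupp.single w q + f)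
            - C.Aop x (C.Aop y (Finsupp.single w q + f))
            + C.Aop y (C.Aop x (Finsupp.single w q + f))
          = (C.Aop ⁅x, y⁆ (C.sg w q) - C.Aop x (C.Aop y (C.sg w q))
              + C.Aop y (C.Aop x (C.sg w q)))
            + (C.Aop ⁅x, y⁆ f - C.Aop x (C.Aop y f) + C.Aop y (C.Aop x f)) := by
        simp only [map_add, sg]
        abel
      rw [hsplit]
      refine add_mem ?_ ih
      have hq1 : C.sg w q = q • C.sg w 1 := C.sg_smul w q
      rw [hq1]
      have h2 : C.Aop ⁅x, y⁆ (q • C.sg w 1) - C.Aop x (C.Aop y (q • C.sg w 1))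
            + C.Aop y (C.Aop x (q • C.sg w 1))
          = q • (C.Aop ⁅x, y⁆ (C.sg w 1) - C.Aop x (C.Aop y (C.sg w 1))
              + C.Aop y (C.Aop x (C.sg w 1))) := by
        simp only [map_smul, smul_sub, smul_add]
      rw [h2]
      exact Submodule.smul_mem _ _ (C.lie_step w x y)

end Ctx

variable {L : Type*} [LieRing L] [LieAlgebra ℂ L] (C : Ctx L)
namespace Ctx
open Polynomial UniversalEnvelopingAlgebra

/-- the universal Whittaker module -/
abbrev Wq := C.W ⧸ C.Rel

noncomputable example : Module ℂ C.Wq := inferInstance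
noncomputable example : Algebra ℂ (Module.End ℂ[X] C.Wq) := inferInstance

/-- the action descends to the quotient -/
noncomputable def Aq (x : L) : C.Wq →ₗ[ℂ[X]] C.Wq :=
  Submodule.mapQ C.Rel C.Rel (C.Aop x) (fun _ hz => C.Aop_rel x hz)

lemma Aq_mk (x : L) (ξ : C.W) :
    C.Aq x (Submodule.Quotient.mk ξ) = Submodule.Quotient.mk (C.Aop x ξ) :=
  Submodule.mapQ_apply C.Rel C.Rel (C.Aop x) ξ

attribute [local instance] LieRing.ofAssociativeRing

/-- the Lie algebra representation -/
noncomputable def rho : L →ₗ⁅ℂ⁆ Module.End ℂ[X] C.Wq where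
  toFun := C.Aq
  map_add' x y := by
    apply LinearMap.ext; intro ζ
    obtain ⟨ξ, rfl⟩ := Submodule.Quotient.mk_surjective _ ζ
    rw [LinearMap.add_apply, Aq_mk, Aq_mk, Aq_mk, C.Aop_add, LinearMap.add_apply,
      Submodule.Quotient.mk_add]
  map_smul' c x := by
    apply LinearMap.ext; intro ζ
    obtain ⟨ξ, rfl⟩ := Submodule.Quotient.mk_surjective _ ζ
    rw [RingHom.id_apply, LinearMap.smul_apply, Aq_mk, Aq_mk, C.Aop_smul,
      LinearMap.smul_apply, Submodule.Quotient.mk_smul]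
  map_lie' {x y} := by
    apply LinearMap.ext; intro ζ
    obtain ⟨ξ, rfl⟩ := Submodule.Quotient.mk_surjective _ ζ
    rw [Ring.lie_def, LinearMap.sub_apply, Module.End.mul_apply, Module.End.mul_apply,
      Aq_mk, Aq_mk, Aq_mk, Aq_mk, Aq_mk]
    rw [← Submodule.Quotient.mk_sub, eq_comm, Submodule.Quotient.eq]
    have h := C.lie_full x y ξ
    have : C.Aop x (C.Aop y ξ) - C.Aop y (C.Aop x ξ) - C.Aop ⁅x, y⁆ ξ
        = -(C.Aop ⁅x, y⁆ ξ - C.Aop x (C.Aop y ξ) + C.Aop y (C.Aop x ξ)) := by abel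
    rw [this]
    exact neg_mem h

/-- the enveloping algebra action -/
noncomputable def Phi : UniversalEnvelopingAlgebra ℂ L →ₐ[ℂ] Module.End ℂ[X] C.Wq :=
  UniversalEnvelopingAlgebra.lift ℂ C.rho

/-- the vacuum vector -/
noncomputable def vac : C.Wq := Submodule.Quotient.mk (C.sg [] 1)

lemma Phi_i (x : L) : C.Phi (ι ℂ x) = C.Aq x := by
  rw [Phi, UniversalEnvelopingAlgebra.lift_ι_apply]; rfl

lemma Aq_pos {x : L} (hx : x ∈ C.P) : C.Aq x C.vac = 0 := by
  rw [vac, Aq_mk, C.Aop_sg1, C.pneg_of_P hx, C.cd_of_P hx, map_zero, zero_smul, add_zero,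
    LinearMap.zero_apply]
  exact Submodule.Quotient.mk_zero _

lemma Aq_d (q : ℂ[X]) :
    C.Aq C.d (Submodule.Quotient.mk (C.sg [] q)) = Submodule.Quotient.mk (C.sg [] (q * X)) := by
  rw [Aq_mk, Aop_single]
  rw [show C.awAux [] C.d = C.lmul (C.pneg C.d) (C.sg [] 1) + C.cd C.d • C.sg [] X from rfl]
  rw [C.pneg_d, C.cd_d, map_zero, one_smul, LinearMap.zero_apply, zero_add]
  rw [show q • C.sg [] X = C.sg [] (q * X) from by simp [sg, Finsupp.smul_single]]

/-- the coefficient functional -/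
noncomputable def co : C.W →ₗ[ℂ[X]] ℂ[X] := Finsupp.lapply []

lemma co_pre (i : C.BIdx) (θ : C.W) : C.co (C.pre i θ) = 0 := by
  rw [co, pre, Finsupp.lapply_apply, Finsupp.lmapDomain_apply]
  apply Finsupp.mapDomain_notin_range
  rintro ⟨w, hw⟩
  exact List.cons_ne_nil i w hw

lemma co_lmul (y : ↥C.N) (θ : C.W) : C.co (C.lmul y θ) = 0 := by
  rw [lmul_apply, map_finsuppSum, Finsupp.sum]
  refine Finset.sum_eq_zero fun i _ => ?_
  rw [LinearMap.map_smul_of_tower, C.co_pre, smul_zero]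

lemma co_rel {z : C.W} (hz : z ∈ C.Rel) : C.co z = 0 := by
  induction hz using Submodule.span_induction with
  | mem z hzz =>
      obtain ⟨ws, u, v, ξ, rfl⟩ := hzz
      cases ws with
      | nil =>
          rw [preL_nil, nu_apply, map_sub, map_sub, co_lmul, co_lmul, co_lmul]
          simp
      | cons j ws' =>
          rw [← pre_preL, co_pre]
  | zero => rw [map_zero]
  | add a b _ _ iha ihb => rw [map_add, iha, ihb, add_zero]
  | smul q a _ iha => rw [map_smul, iha, smul_zero]

/-- coefficient functional on the quotient -/
noncomputable def coq : C.Wq →ₗ[ℂ[X]] ℂ[X] :=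
  Submodule.liftQ C.Rel C.co (fun z hz => C.co_rel hz)

lemma coq_mk (ξ : C.W) : C.coq (Submodule.Quotient.mk ξ) = C.co ξ :=
  Submodule.liftQ_apply _ _ _

lemma coq_sg (q : ℂ[X]) : C.coq (Submodule.Quotient.mk (C.sg [] q)) = q := by
  rw [coq_mk, co, Finsupp.lapply_apply, sg, Finsupp.single_eq_same]

lemma vac_smul (q : ℂ[X]) : Submodule.Quotient.mk (C.sg [] q) = q • C.vac := by
  rw [vac, ← Submodule.Quotient.mk_smul, ← C.sg_smul]

end Ctx


variable {L : Type*} [LieRing L] [LieAlgebra ℂ L] (C : Ctx L)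
namespace Ctx
open Polynomial UniversalEnvelopingAlgebra

lemma Phi_aeval (q q' : ℂ[X]) :
    C.Phi (aeval (ι ℂ C.d) q) (Submodule.Quotient.mk (C.sg [] q'))
      = Submodule.Quotient.mk (C.sg [] (q * q')) := by
  induction q using Polynomial.induction_on generalizing q' with
  | C a =>
      rw [aeval_C, AlgHom.commutes, Module.algebraMap_end_apply, ← Submodule.Quotient.mk_smul]
      congr 1
      rw [sg, sg, Finsupp.smul_single, Polynomial.smul_eq_C_mul]
  | add r s ihr ihs =>
      rw [map_add, map_add, LinearMap.add_apply, ihr, ihs, ← Submodule.Quotient.mk_add]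
      congr 1
      rw [sg, sg, sg, ← Finsupp.single_add, add_mul]
  | monomial n a ih =>
      have hsplit : (Polynomial.C a * X ^ (n + 1) : ℂ[X]) = (Polynomial.C a * X ^ n) * X := by ring
      rw [hsplit, map_mul, map_mul, Module.End.mul_apply, aeval_X, C.Phi_i, C.Aq_d, ih]
      congr 1
      rw [sg, sg]
      congr 1
      ring

end Ctx

open Polynomial UniversalEnvelopingAlgebra

lemma Psub_eq (g : ℤ → Submodule ℂ L) : Psub g = ⨆ n > (0 : ℤ), g n := by
  rw [Psub]
  exact iSup_subtype
end Stmt6Aux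

open UniversalEnvelopingAlgebra Polynomial

/-- The standard Whittaker module `M_0` for the zero homomorphism: the quotient of `U(𝔤)`
by the left ideal generated by `{ι x : x ∈ 𝔫⁺}`. -/
noncomputable def zeroWhittakerIdeal (L : Type*) [LieRing L] [LieAlgebra ℂ L]
    (Np : LieSubalgebra ℂ L) :
    Submodule (UniversalEnvelopingAlgebra ℂ L) (UniversalEnvelopingAlgebra ℂ L) :=
  Submodule.span (UniversalEnvelopingAlgebra ℂ L) {a | ∃ x : Np, a = ι ℂ (x : L)}

/-- Let `𝔤 = ⊕_{n∈ℤ} 𝔤ₙ` be ℤ-graded with `𝔤₀ = ℂd` one-dimensional and `⁅d,x⁆ = n•x`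
for `x ∈ 𝔤ₙ`, and let `𝔫⁺ = ⊕_{n>0} 𝔤ₙ`.  For the standard Whittaker module `M_0` of the
zero homomorphism and any nonconstant polynomial `p`, the cyclic submodule
`U(𝔤)·[p(ι d)]` is a nonzero proper submodule of `M_0`; in particular `M_0` is not
simple. -/
theorem stmt_6 (L : Type*) [LieRing L] [LieAlgebra ℂ L]
    (g : ℤ → Submodule ℂ L) (hInt : DirectSum.IsInternal g)
    (hBrk : ∀ m n : ℤ, ∀ x ∈ g m, ∀ y ∈ g n, ⁅x, y⁆ ∈ g (m + n))
    (d : L) (hd : d ≠ 0) (hd0 : g 0 = Submodule.span ℂ {d})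
    (hdx : ∀ n : ℤ, ∀ x ∈ g n, ⁅d, x⁆ = (n : ℂ) • x)
    (Np : LieSubalgebra ℂ L) (hNp : Np.toSubmodule = ⨆ n > (0 : ℤ), g n)
    (p : Polynomial ℂ) (hp : 0 < p.natDegree) :
    Submodule.span (UniversalEnvelopingAlgebra ℂ L)
        {(Submodule.Quotient.mk (aeval (ι ℂ d) p) :
          UniversalEnvelopingAlgebra ℂ L ⧸ zeroWhittakerIdeal L Np)} ≠ ⊥ ∧
    Submodule.span (UniversalEnvelopingAlgebra ℂ L)
        {(Submodule.Quotient.mk (aeval (ι ℂ d) p) :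
          UniversalEnvelopingAlgebra ℂ L ⧸ zeroWhittakerIdeal L Np)} ≠ ⊤ ∧
    ¬ IsSimpleModule (UniversalEnvelopingAlgebra ℂ L)
        (UniversalEnvelopingAlgebra ℂ L ⧸ zeroWhittakerIdeal L Np) := by
  set C : Stmt6Aux.Ctx L := ⟨g, hInt, d, hd, hd0, hBrk, hdx⟩ with hC
  have hCd : C.d = d := rfl
  have hPeq : C.P = ⨆ n > (0 : ℤ), g n := Stmt6Aux.Psub_eq g
  have hNpP : ∀ x : Np, (x : L) ∈ C.P := by
    intro x
    have hx : (x : L) ∈ Np.toSubmodule := x.2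
    rw [hNp] at hx
    rw [hPeq]
    exact hx
  have hkill : ∀ u ∈ zeroWhittakerIdeal L Np, C.Phi u C.vac = 0 := by
    intro u hu
    induction hu using Submodule.span_induction with
    | mem a ha =>
        obtain ⟨x, rfl⟩ := ha
        rw [C.Phi_i]
        exact C.Aq_pos (hNpP x)
    | zero => rw [map_zero, LinearMap.zero_apply]
    | add a b _ _ iha ihb => rw [map_add, LinearMap.add_apply, iha, ihb, add_zero]
    | smul a u _ ihu => rw [smul_eq_mul, map_mul, Module.End.mul_apply, ihu, map_zero]
  set z : UniversalEnvelopingAlgebra ℂ L := aeval (ι ℂ d) p with hzdef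
  have hz : C.Phi z C.vac = Submodule.Quotient.mk (C.sg [] p) := by
    have h := C.Phi_aeval p 1
    rw [mul_one, hCd] at h
    exact h
  have hbot : Submodule.span (UniversalEnvelopingAlgebra ℂ L)
      {(Submodule.Quotient.mk z :
        UniversalEnvelopingAlgebra ℂ L ⧸ zeroWhittakerIdeal L Np)} ≠ ⊥ := by
    intro h
    have h0 : (Submodule.Quotient.mk z :
        UniversalEnvelopingAlgebra ℂ L ⧸ zeroWhittakerIdeal L Np) = 0 :=
      Submodule.span_singleton_eq_bot.mp h
    have hmem : z ∈ zeroWhittakerIdeal L Np := (Submodule.Quotient.mk_eq_zero _).mp h0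
    have h3 : (Submodule.Quotient.mk (C.sg [] p) : C.Wq) = 0 := by
      rw [← hz]; exact hkill z hmem
    have h4 := congrArg C.coq h3
    rw [C.coq_sg, map_zero] at h4
    rw [h4] at hp
    simp at hp
  have htop : Submodule.span (UniversalEnvelopingAlgebra ℂ L)
      {(Submodule.Quotient.mk z :
        UniversalEnvelopingAlgebra ℂ L ⧸ zeroWhittakerIdeal L Np)} ≠ ⊤ := by
    intro h
    have h1 : (Submodule.Quotient.mk 1 :
        UniversalEnvelopingAlgebra ℂ L ⧸ zeroWhittakerIdeal L Np)
        ∈ Submodule.span (UniversalEnvelopingAlgebra ℂ L)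
          {(Submodule.Quotient.mk z :
            UniversalEnvelopingAlgebra ℂ L ⧸ zeroWhittakerIdeal L Np)} := by
      rw [h]; trivial
    obtain ⟨u, hu⟩ := Submodule.mem_span_singleton.mp h1
    have h2 : (Submodule.Quotient.mk (u * z) :
        UniversalEnvelopingAlgebra ℂ L ⧸ zeroWhittakerIdeal L Np)
        = Submodule.Quotient.mk 1 := by
      rw [← hu, ← Submodule.Quotient.mk_smul, smul_eq_mul]
    have hmem : u * z - 1 ∈ zeroWhittakerIdeal L Np := (Submodule.Quotient.eq _).mp h2
    have h5 := hkill _ hmem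
    rw [map_sub, map_one, LinearMap.sub_apply, Module.End.one_apply, sub_eq_zero] at h5
    have h6 : C.Phi (u * z) C.vac = p • (C.Phi u C.vac) := by
      rw [map_mul, Module.End.mul_apply, hz, C.vac_smul, LinearMap.map_smul]
    rw [h6] at h5
    have h7 := congrArg C.coq h5
    rw [LinearMap.map_smul, smul_eq_mul] at h7
    have h8 : C.coq C.vac = 1 := C.coq_sg 1
    rw [h8] at h7
    have hunit : IsUnit p := IsUnit.of_mul_eq_one (a := p) _ h7
    have := Polynomial.natDegree_eq_zero_of_isUnit hunit
    omega
  refine ⟨hbot, htop, ?_⟩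
  intro hs
  rcases eq_bot_or_eq_top (Submodule.span (UniversalEnvelopingAlgebra ℂ L)
      {(Submodule.Quotient.mk z :
        UniversalEnvelopingAlgebra ℂ L ⧸ zeroWhittakerIdeal L Np)}) with h | h
  · exact hbot h
  · exact htop h
end

section
/- For every μ ∈ ℂ, every element z of the center of U(𝔤), and every c ∈ ℂ: if z·m = c·m for all m in the Verma module M(μ), then z·f = c·f for all f in the dual module N(−μ)*. That is, N(−μ)* admits the central character of M(μ). -/
open UniversalEnvelopingAlgebra

attribute [local instance 100] LieRing.ofAssociativeRing

/-- The left ideal of `U(𝔤)` generated by `{ι x : x ∈ 𝔫⁺} ∪ {ι d - μ·1}` (defining the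
Verma module `M(μ)`). -/
noncomputable def vermaIdeal (L : Type*) [LieRing L] [LieAlgebra ℂ L]
    (Np : LieSubalgebra ℂ L) (d : L) (μ : ℂ) :
    Submodule (UniversalEnvelopingAlgebra ℂ L) (UniversalEnvelopingAlgebra ℂ L) :=
  Submodule.span (UniversalEnvelopingAlgebra ℂ L)
    ({a | ∃ x : Np, a = ι ℂ (x : L)} ∪
      {ι ℂ d - algebraMap ℂ (UniversalEnvelopingAlgebra ℂ L) μ})

/-- The left ideal of `U(𝔤)` generated by `{ι x : x ∈ 𝔫⁻} ∪ {ι d + μ·1}` (defining the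
lowest-weight Verma module `N(−μ)`). -/
noncomputable def lowestVermaIdeal (L : Type*) [LieRing L] [LieAlgebra ℂ L]
    (Nn : LieSubalgebra ℂ L) (d : L) (μ : ℂ) :
    Submodule (UniversalEnvelopingAlgebra ℂ L) (UniversalEnvelopingAlgebra ℂ L) :=
  Submodule.span (UniversalEnvelopingAlgebra ℂ L)
    ({a | ∃ x : Nn, a = ι ℂ (x : L)} ∪
      {ι ℂ d + algebraMap ℂ (UniversalEnvelopingAlgebra ℂ L) μ})

/-- The representation of a Lie algebra on the dual of a module, `(x·f)(w) = −f(x·w)`. -/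
noncomputable def dualLieRep {L : Type*} [LieRing L] [LieAlgebra ℂ L]
    {V : Type*} [AddCommGroup V] [Module ℂ V]
    (ρ : L →ₗ⁅ℂ⁆ Module.End ℂ V) : L →ₗ⁅ℂ⁆ Module.End ℂ (Module.Dual ℂ V) where
  toFun x := -((ρ x).dualMap)
  map_add' x y := by ext f w; simp; abel
  map_smul' c x := by ext f w; simp
  map_lie' {x y} := by ext f w; simp [Ring.lie_def]


set_option maxHeartbeats 1600000
set_option synthInstance.maxHeartbeats 400000

noncomputable section Aux

variable {L : Type*} [LieRing L] [LieAlgebra ℂ L]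

local notation "𝓤" => UniversalEnvelopingAlgebra ℂ L

/-- Any subalgebra of `U(g)` containing the range of `ι` is everything. -/
theorem uea_subalg_top (A : Subalgebra ℂ 𝓤) (h : ∀ x : L, ι ℂ x ∈ A) : A = ⊤ := by
  let fA : L →ₗ⁅ℂ⁆ A :=
    { toFun := fun x => ⟨ι ℂ x, h x⟩
      map_add' := fun x y => by ext; simp
      map_smul' := fun c x => by ext; simp
      map_lie' := fun {x y} => by
        ext
        simp [LieRing.of_associative_ring_bracket] }
  have key : A.val.comp (lift ℂ fA) = AlgHom.id ℂ 𝓤 := by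
    apply UniversalEnvelopingAlgebra.hom_ext
    apply LieHom.ext
    intro x
    show A.val ((lift ℂ fA) (ι ℂ x)) = ι ℂ x
    rw [lift_ι_apply]
    rfl
  apply top_unique
  intro u _
  have : A.val ((lift ℂ fA) u) = u := by
    have := congrArg (fun φ => φ u) key
    simpa using this
  rw [← this]
  exact (lift ℂ fA u).2

/-- `ad (ι d)` as a linear endomorphism of `U(g)`. -/
def adD (d : L) : Module.End ℂ 𝓤 :=
  LinearMap.mulLeft ℂ (ι ℂ d) - LinearMap.mulRight ℂ (ι ℂ d)

theorem adD_apply (d : L) (u : 𝓤) : adD d u = ι ℂ d * u - u * ι ℂ d := rfl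

theorem adD_mul (d : L) {a b : ℂ} {u v : 𝓤}
    (hu : u ∈ (adD d).eigenspace a) (hv : v ∈ (adD d).eigenspace b) :
    u * v ∈ (adD d).eigenspace (a + b) := by
  rw [Module.End.mem_eigenspace_iff] at hu hv ⊢
  rw [adD_apply] at hu hv ⊢
  have : ι ℂ d * (u * v) - u * v * ι ℂ d
      = (ι ℂ d * u - u * ι ℂ d) * v + u * (ι ℂ d * v - v * ι ℂ d) := by noncomm_ring
  rw [this, hu, hv, smul_mul_assoc, mul_smul_comm, add_smul]

theorem adD_one (d : L) : (1 : 𝓤) ∈ (adD d).eigenspace 0 := by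
  rw [Module.End.mem_eigenspace_iff, adD_apply]
  simp

theorem adD_algebraMap (d : L) (c : ℂ) :
    (algebraMap ℂ 𝓤 c) ∈ (adD d).eigenspace 0 := by
  rw [Module.End.mem_eigenspace_iff, adD_apply]
  simp [Algebra.commutes]

section Graded

variable (g : ℤ → Submodule ℂ L)

theorem adD_iota {d : L} (hdx : ∀ n : ℤ, ∀ x ∈ g n, ⁅d, x⁆ = (n : ℂ) • x)
    {n : ℤ} {x : L} (hx : x ∈ g n) : ι ℂ x ∈ (adD d).eigenspace ((n : ℤ) : ℂ) := by
  rw [Module.End.mem_eigenspace_iff, adD_apply]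
  have h1 : ι ℂ d * ι ℂ x - ι ℂ x * ι ℂ d = ι ℂ ⁅d, x⁆ := by
    rw [LieHom.map_lie, LieRing.of_associative_ring_bracket]
  rw [h1, hdx n x hx, map_smul]

/-- Monomials in `U(g)` with homogeneous factors, with total degree and length. -/
inductive IsMon : UniversalEnvelopingAlgebra ℂ L → ℤ → ℕ → Prop
  | one : IsMon 1 0 0
  | mul {u : UniversalEnvelopingAlgebra ℂ L} {n : ℤ} {k : ℕ} {x : L} {m : ℤ} :
      IsMon u n k → x ∈ g m → IsMon (u * ι ℂ x) (n + m) (k + 1)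

theorem IsMon.eig {d : L} (hdx : ∀ n : ℤ, ∀ x ∈ g n, ⁅d, x⁆ = (n : ℂ) • x)
    {u : 𝓤} {n : ℤ} {k : ℕ} (hu : IsMon g u n k) :
    u ∈ (adD d).eigenspace ((n : ℤ) : ℂ) := by
  induction hu with
  | one => exact_mod_cast adD_one d
  | mul hu' hx ih =>
      rename_i u' n' k' x m
      have := adD_mul d ih (adD_iota g hdx hx)
      push_cast at this ⊢
      exact this

theorem IsMon.mul_mon {u v : 𝓤} {n m : ℤ} {k l : ℕ}
    (hu : IsMon g u n k) (hv : IsMon g v m l) : IsMon g (u * v) (n + m) (k + l) := by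
  induction hv with
  | one => simpa using hu
  | mul hv' hx ih =>
      rename_i v' m' l' x p
      have := ih.mul hx
      rw [← mul_assoc, show n + (m' + p) = n + m' + p by omega,
        show k + (l' + 1) = k + l' + 1 by omega]
      exact this

theorem iota_isMon {m : ℤ} {x : L} (hx : x ∈ g m) : IsMon g (ι ℂ x) m 1 := by
  have := IsMon.one.mul (g := g) hx
  simpa using this

end Graded

end Aux

section Ideal

variable {L : Type*} [LieRing L] [LieAlgebra ℂ L]

local notation "𝓤" => UniversalEnvelopingAlgebra ℂ L

variable (g : ℤ → Submodule ℂ L) (Nn : LieSubalgebra ℂ L) (d : L) (μ : ℂ)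

theorem J_mul_left {u : 𝓤} (hu : u ∈ lowestVermaIdeal L Nn d μ) (v : 𝓤) :
    v * u ∈ lowestVermaIdeal L Nn d μ := by
  simpa [smul_eq_mul] using (lowestVermaIdeal L Nn d μ).smul_mem v hu

theorem J_csmul {u : 𝓤} (hu : u ∈ lowestVermaIdeal L Nn d μ) (t : ℂ) :
    t • u ∈ lowestVermaIdeal L Nn d μ := by
  rw [Algebra.smul_def]
  exact J_mul_left Nn d μ hu _

theorem J_d (u : 𝓤) :
    u * (ι ℂ d + algebraMap ℂ 𝓤 μ) ∈ lowestVermaIdeal L Nn d μ := by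
  have hgen : (ι ℂ d + algebraMap ℂ 𝓤 μ) ∈ lowestVermaIdeal L Nn d μ :=
    Submodule.subset_span (Set.mem_union_right _ rfl)
  exact J_mul_left Nn d μ hgen u

theorem J_right_neg (hNn : Nn.toSubmodule = ⨆ n < (0 : ℤ), g n)
    {q : ℤ} (hq : q < 0) {x : L} (hx : x ∈ g q) (u : 𝓤) :
    u * ι ℂ x ∈ lowestVermaIdeal L Nn d μ := by
  have hxN : x ∈ Nn := by
    have hle : g q ≤ Nn.toSubmodule := by
      rw [hNn]
      exact le_iSup₂ (f := fun (n : ℤ) (_ : n < 0) => g n) q hq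
    exact hle hx
  have hgen : ι ℂ x ∈ lowestVermaIdeal L Nn d μ :=
    Submodule.subset_span (Set.mem_union_left _ ⟨⟨x, hxN⟩, rfl⟩)
  exact J_mul_left Nn d μ hgen u

/-- The commutator of a monomial with a homogeneous generator lies in the span of
monomials of the same length and total degree. -/
theorem monComm (hBrk : ∀ m n : ℤ, ∀ x ∈ g m, ∀ y ∈ g n, ⁅x, y⁆ ∈ g (m + n))
    {u : 𝓤} {n : ℤ} {k : ℕ} (hu : IsMon g u n k) {y : L} {q : ℤ} (hy : y ∈ g q) :
    u * ι ℂ y - ι ℂ y * u ∈ Submodule.span ℂ {w : 𝓤 | IsMon g w (n + q) k} := by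
  induction hu with
  | one => simp
  | mul hu' hx ih =>
      rename_i u' n' k' x m
      have hid : u' * ι ℂ x * ι ℂ y - ι ℂ y * (u' * ι ℂ x)
          = u' * (ι ℂ x * ι ℂ y - ι ℂ y * ι ℂ x) + (u' * ι ℂ y - ι ℂ y * u') * ι ℂ x := by
        noncomm_ring
      rw [hid]
      apply Submodule.add_mem
      · have hb : ι ℂ x * ι ℂ y - ι ℂ y * ι ℂ x = ι ℂ ⁅x, y⁆ := by
          rw [LieHom.map_lie, LieRing.of_associative_ring_bracket]
        rw [hb]
        apply Submodule.subset_span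
        have := hu'.mul (hBrk m q x hx y hy)
        rw [show n' + (m + q) = n' + m + q by omega] at this
        exact this
      · have himg := Submodule.apply_mem_span_image_of_mem_span
          (LinearMap.mulRight ℂ (ι ℂ x)) ih
        refine Submodule.span_le.mpr ?_ himg
        rintro w ⟨w', hw', rfl⟩
        apply Submodule.subset_span
        have := (hw' : IsMon g w' (n' + q) k').mul hx
        rw [show n' + q + m = n' + m + q by omega] at this
        exact this

/-- Monomials of negative total degree lie in the lowest-weight Verma ideal. -/
theorem monNeg (hBrk : ∀ m n : ℤ, ∀ x ∈ g m, ∀ y ∈ g n, ⁅x, y⁆ ∈ g (m + n))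
    (hd0 : g 0 = Submodule.span ℂ {d})
    (hNn : Nn.toSubmodule = ⨆ n < (0 : ℤ), g n) :
    ∀ (k : ℕ) {u : 𝓤} {n : ℤ} {l : ℕ}, IsMon g u n l → l ≤ k → n < 0 →
      u ∈ lowestVermaIdeal L Nn d μ := by
  intro k
  induction k with
  | zero =>
      intro u n l hu hl hn
      cases hu with
      | one => omega
      | mul hu' hx => omega
  | succ k ih =>
      intro u n l hu hl hn
      cases hu with
      | one => omega
      | mul hu' hx =>
          rename_i u' n' l' x m
          rcases lt_trichotomy m 0 with hm | hm | hm
          · exact J_right_neg g Nn d μ hNn hm hx u'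
          · subst hm
            rw [hd0] at hx
            obtain ⟨t, rfl⟩ := Submodule.mem_span_singleton.mp hx
            have hu'J : u' ∈ lowestVermaIdeal L Nn d μ := ih hu' (by omega) (by omega)
            have hid : u' * ι ℂ (t • d)
                = t • (u' * (ι ℂ d + algebraMap ℂ 𝓤 μ)) - (t * μ) • u' := by
              rw [map_smul, mul_smul_comm, mul_add, smul_add]
              rw [show u' * algebraMap ℂ 𝓤 μ = μ • u' by
                rw [Algebra.smul_def, ← Algebra.commutes]]
              rw [smul_smul]
              abel
            rw [hid]
            exact Submodule.sub_mem _ (J_csmul Nn d μ (J_d Nn d μ u') t)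
              (J_csmul Nn d μ hu'J (t * μ))
          · have hu'J : u' ∈ lowestVermaIdeal L Nn d μ := ih hu' (by omega) (by omega)
            have h1 : ι ℂ x * u' ∈ lowestVermaIdeal L Nn d μ := J_mul_left Nn d μ hu'J _
            have h2 : u' * ι ℂ x - ι ℂ x * u' ∈ lowestVermaIdeal L Nn d μ := by
              have hc := monComm g hBrk hu' hx
              have hsub : {w : 𝓤 | IsMon g w (n' + m) l'} ⊆
                  ((lowestVermaIdeal L Nn d μ).restrictScalars ℂ : Set 𝓤) :=
                fun w hw => ih hw (by omega) (by omega)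
              exact (Submodule.span_le.mpr hsub) hc
            have := Submodule.add_mem (lowestVermaIdeal L Nn d μ) h2 h1
            simpa using this

/-- `ι x * u ∈ J` when `x` is homogeneous of positive degree `m` and `u` is a monomial of
degree `-m`. -/
theorem monPos (hBrk : ∀ m n : ℤ, ∀ x ∈ g m, ∀ y ∈ g n, ⁅x, y⁆ ∈ g (m + n))
    (hd0 : g 0 = Submodule.span ℂ {d})
    (hNn : Nn.toSubmodule = ⨆ n < (0 : ℤ), g n) :
    ∀ (k : ℕ) {u : 𝓤} {n : ℤ} {l : ℕ} {m : ℤ} {x : L}, IsMon g u n l → l ≤ k →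
      0 < m → n + m = 0 → x ∈ g m →
      ι ℂ x * u ∈ lowestVermaIdeal L Nn d μ := by
  intro k
  induction k with
  | zero =>
      intro u n l m x hu hl hm hnm hx
      cases hu with
      | one => omega
      | mul hu' hy => omega
  | succ k ih =>
      intro u n l m x hu hl hm hnm hx
      cases hu with
      | one => omega
      | mul hu' hy =>
          rename_i u' n' l' y q
          rcases lt_trichotomy q 0 with hq | hq | hq
          · rw [← mul_assoc]
            exact J_right_neg g Nn d μ hNn hq hy _
          · subst hq
            rw [hd0] at hy
            obtain ⟨t, rfl⟩ := Submodule.mem_span_singleton.mp hy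
            have hxu' : ι ℂ x * u' ∈ lowestVermaIdeal L Nn d μ :=
              ih hu' (by omega) hm (by omega) hx
            have hid : ι ℂ x * (u' * ι ℂ (t • d))
                = t • ((ι ℂ x * u') * (ι ℂ d + algebraMap ℂ 𝓤 μ)) - (t * μ) • (ι ℂ x * u') := by
              rw [map_smul, mul_smul_comm, mul_smul_comm, mul_add, smul_add]
              rw [show (ι ℂ x * u') * algebraMap ℂ 𝓤 μ = μ • (ι ℂ x * u') by
                rw [Algebra.smul_def, ← Algebra.commutes]]
              rw [smul_smul, ← mul_assoc]
              abel
            rw [hid]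
            exact Submodule.sub_mem _ (J_csmul Nn d μ (J_d Nn d μ _) t)
              (J_csmul Nn d μ hxu' (t * μ))
          · -- q > 0
            have hxmon : IsMon g (ι ℂ x * u') (m + n') (1 + l') :=
              (iota_isMon g hx).mul_mon g hu'
            have hneg : ι ℂ x * u' ∈ lowestVermaIdeal L Nn d μ :=
              monNeg g Nn d μ hBrk hd0 hNn (1 + l') hxmon le_rfl (by omega)
            have hterm1 : ι ℂ y * (ι ℂ x * u') ∈ lowestVermaIdeal L Nn d μ :=
              J_mul_left Nn d μ hneg _
            have hterm2 : ι ℂ ⁅x, y⁆ * u' ∈ lowestVermaIdeal L Nn d μ :=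
              ih hu' (by omega) (by omega) (by omega) (hBrk m q x hx y hy)
            have hterm3 : ι ℂ x * (u' * ι ℂ y - ι ℂ y * u') ∈ lowestVermaIdeal L Nn d μ := by
              have hc := monComm g hBrk hu' hy
              have : {w : 𝓤 | IsMon g w (n' + q) l'} ⊆
                  (Submodule.comap (LinearMap.mulLeft ℂ (ι ℂ x))
                    ((lowestVermaIdeal L Nn d μ).restrictScalars ℂ) : Set 𝓤) := by
                intro w hw
                exact ih hw (by omega) hm (by omega) hx
              exact (Submodule.span_le.mpr this) hc
            have hid : ι ℂ x * (u' * ι ℂ y)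
                = ι ℂ y * (ι ℂ x * u') + ι ℂ ⁅x, y⁆ * u'
                  + ι ℂ x * (u' * ι ℂ y - ι ℂ y * u') := by
              rw [LieHom.map_lie, LieRing.of_associative_ring_bracket]
              noncomm_ring
            rw [hid]
            exact Submodule.add_mem _ (Submodule.add_mem _ hterm1 hterm2) hterm3

end Ideal

section SpanK

variable {L : Type*} [LieRing L] [LieAlgebra ℂ L]

local notation "𝓤" => UniversalEnvelopingAlgebra ℂ L

variable (g : ℤ → Submodule ℂ L) (d : L) (μ : ℂ)

theorem mon_mul_span {u : 𝓤} (hu : ∃ n k, IsMon g u n k) {v : 𝓤}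
    (hv : v ∈ Submodule.span ℂ {w : 𝓤 | ∃ n k, IsMon g w n k}) :
    u * v ∈ Submodule.span ℂ {w : 𝓤 | ∃ n k, IsMon g w n k} := by
  obtain ⟨n, k, hu⟩ := hu
  induction hv using Submodule.span_induction with
  | mem w hw =>
      obtain ⟨m, l, hw⟩ := hw
      exact Submodule.subset_span ⟨n + m, k + l, hu.mul_mon g hw⟩
  | zero => simp
  | add a b _ _ ha hb => rw [mul_add]; exact Submodule.add_mem _ ha hb
  | smul c a _ ha => rw [mul_smul_comm]; exact Submodule.smul_mem _ c ha

theorem span_mon_top (hInt : DirectSum.IsInternal g) :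
    Submodule.span ℂ {u : 𝓤 | ∃ n k, IsMon g u n k} = ⊤ := by
  set P := Submodule.span ℂ {u : 𝓤 | ∃ n k, IsMon g u n k} with hP
  have hone : (1 : 𝓤) ∈ P := Submodule.subset_span ⟨0, 0, IsMon.one⟩
  have hmul : ∀ u v : 𝓤, u ∈ P → v ∈ P → u * v ∈ P := by
    intro u v hu hv
    induction hu using Submodule.span_induction with
    | mem w hw => exact mon_mul_span g hw hv
    | zero => simp
    | add a b _ _ ha hb => rw [add_mul]; exact Submodule.add_mem _ ha hb
    | smul c a _ ha => rw [smul_mul_assoc]; exact Submodule.smul_mem _ c ha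
  let A : Subalgebra ℂ 𝓤 := P.toSubalgebra hone hmul
  have hA : A = ⊤ := by
    apply uea_subalg_top
    intro x
    show ι ℂ x ∈ P
    have hx : x ∈ (⊤ : Submodule ℂ L) := trivial
    rw [← hInt.submodule_iSup_eq_top] at hx
    have hle : (⨆ n : ℤ, g n) ≤
        Submodule.comap ((ι ℂ : L →ₗ⁅ℂ⁆ 𝓤) : L →ₗ[ℂ] 𝓤) P := by
      refine iSup_le fun n => fun y hy => ?_
      exact Submodule.subset_span ⟨n, 1, iota_isMon g hy⟩
    exact hle hx
  rw [eq_top_iff]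
  intro u _
  have hu : u ∈ A := by rw [hA]; exact Algebra.mem_top
  exact hu

theorem mem_span_mon (hInt : DirectSum.IsInternal g) (u : 𝓤) :
    u ∈ Submodule.span ℂ {w : 𝓤 | ∃ n k, IsMon g w n k} := by
  rw [span_mon_top g hInt]; exact Submodule.mem_top

/-- Homogeneous generators of the "opposite side" right ideal. -/
def Kset (n : ℤ) : Set 𝓤 :=
  {a | ∃ m : ℤ, 0 < m ∧ ∃ x ∈ g m, ∃ u k, IsMon g u (n - m) k ∧ a = ι ℂ x * u} ∪
  {a | ∃ u k, IsMon g u n k ∧ a = (ι ℂ d + algebraMap ℂ 𝓤 μ) * u}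

theorem Kset_le_eig (hd0 : g 0 = Submodule.span ℂ {d})
    (hdx : ∀ n : ℤ, ∀ x ∈ g n, ⁅d, x⁆ = (n : ℂ) • x) (n : ℤ) :
    Kset g d μ n ⊆ ((adD d).eigenspace ((n : ℤ) : ℂ) : Set 𝓤) := by
  have hdmem : d ∈ g 0 := by rw [hd0]; exact Submodule.mem_span_singleton_self d
  rintro a (⟨m, hm, x, hx, u, k, hu, rfl⟩ | ⟨u, k, hu, rfl⟩)
  · have := adD_mul d (adD_iota g hdx hx) (hu.eig g hdx)
    have hc : ((m : ℤ) : ℂ) + ((n - m : ℤ) : ℂ) = ((n : ℤ) : ℂ) := by push_cast; ring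
    rwa [hc] at this
  · have h1 : (ι ℂ d + algebraMap ℂ 𝓤 μ) ∈ (adD d).eigenspace 0 := by
      have h0 := adD_iota g hdx hdmem
      rw [show ((0 : ℤ) : ℂ) = 0 from Int.cast_zero] at h0
      exact Submodule.add_mem _ h0 (adD_algebraMap d μ)
    have := adD_mul d h1 (hu.eig g hdx)
    rwa [zero_add] at this

theorem Kset_zero_le_J (Nn : LieSubalgebra ℂ L)
    (hBrk : ∀ m n : ℤ, ∀ x ∈ g m, ∀ y ∈ g n, ⁅x, y⁆ ∈ g (m + n))
    (hd0 : g 0 = Submodule.span ℂ {d})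
    (hdx : ∀ n : ℤ, ∀ x ∈ g n, ⁅d, x⁆ = (n : ℂ) • x)
    (hNn : Nn.toSubmodule = ⨆ n < (0 : ℤ), g n) :
    Kset g d μ 0 ⊆ (lowestVermaIdeal L Nn d μ : Set 𝓤) := by
  rintro a (⟨m, hm, x, hx, u, k, hu, rfl⟩ | ⟨u, k, hu, rfl⟩)
  · exact monPos g Nn d μ hBrk hd0 hNn k hu le_rfl hm (by omega) hx
  · have heig := IsMon.eig g hdx hu (d := d)
    rw [Module.End.mem_eigenspace_iff, adD_apply] at heig
    rw [show ((0 : ℤ) : ℂ) = 0 from Int.cast_zero, zero_smul, sub_eq_zero] at heig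
    have hcomm : ι ℂ d * u = u * ι ℂ d := heig
    have hid : (ι ℂ d + algebraMap ℂ 𝓤 μ) * u = u * (ι ℂ d + algebraMap ℂ 𝓤 μ) := by
      rw [add_mul, mul_add, hcomm, Algebra.commutes]
    rw [hid]
    exact J_d Nn d μ u

/-- The span of all `Kset` generators: a right ideal containing `T (vermaIdeal)`. -/
def KS : Submodule ℂ 𝓤 := Submodule.span ℂ (⋃ n : ℤ, Kset g d μ n)

theorem Kset_mul_mon {n : ℤ} {a : 𝓤} (ha : a ∈ Kset g d μ n) {w : 𝓤} {m : ℤ} {l : ℕ}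
    (hw : IsMon g w m l) : a * w ∈ Kset g d μ (n + m) := by
  rcases ha with ⟨p, hp, x, hx, u, k, hu, rfl⟩ | ⟨u, k, hu, rfl⟩
  · refine Or.inl ⟨p, hp, x, hx, u * w, k + l, ?_, by rw [mul_assoc]⟩
    have := hu.mul_mon g hw
    rwa [show n - p + m = n + m - p by omega] at this
  · exact Or.inr ⟨u * w, k + l, hu.mul_mon g hw, by rw [mul_assoc]⟩

theorem KS_mul_right (hInt : DirectSum.IsInternal g) {a : 𝓤}
    (ha : a ∈ KS g d μ) (v : 𝓤) : a * v ∈ KS g d μ := by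
  induction ha using Submodule.span_induction generalizing v with
  | mem b hb =>
      obtain ⟨s, ⟨n, rfl⟩, hbn⟩ := hb
      have hv := mem_span_mon g hInt v
      induction hv using Submodule.span_induction with
      | mem w hw =>
          obtain ⟨m, l, hw⟩ := hw
          exact Submodule.subset_span (Set.mem_iUnion.mpr ⟨n + m, Kset_mul_mon g d μ hbn hw⟩)
      | zero => simp
      | add a' b' _ _ ha' hb' => rw [mul_add]; exact Submodule.add_mem _ ha' hb'
      | smul c a' _ ha' => rw [mul_smul_comm]; exact Submodule.smul_mem _ c ha'
  | zero => simp
  | add a' b' _ _ ha' hb' => rw [add_mul]; exact Submodule.add_mem _ (ha' v) (hb' v)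
  | smul c a' _ ha' => rw [smul_mul_assoc]; exact Submodule.smul_mem _ c (ha' v)

end SpanK

section Anti

variable {L : Type*} [LieRing L] [LieAlgebra ℂ L]

local notation "𝓤" => UniversalEnvelopingAlgebra ℂ L

/-- The Lie algebra map `x ↦ -op (ι x)` into the opposite algebra. -/
def sAntiLie : L →ₗ⁅ℂ⁆ (UniversalEnvelopingAlgebra ℂ L)ᵐᵒᵖ where
  toFun x := -MulOpposite.op (ι ℂ x)
  map_add' x y := by simp only [map_add, MulOpposite.op_add, neg_add]
  map_smul' c x := by simp
  map_lie' {x y} := by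
    show -MulOpposite.op (ι ℂ ⁅x, y⁆) = ⁅-MulOpposite.op (ι ℂ x), -MulOpposite.op (ι ℂ y)⁆
    rw [LieHom.map_lie, LieRing.of_associative_ring_bracket,
      LieRing.of_associative_ring_bracket]
    simp only [neg_mul_neg, MulOpposite.op_sub, MulOpposite.op_mul]
    abel

/-- The antipode-like antihomomorphism, as an algebra map into the opposite algebra. -/
def sAnti : 𝓤 →ₐ[ℂ] (𝓤)ᵐᵒᵖ := lift ℂ sAntiLie

/-- The antipode as a bare map `U(g) → U(g)`. -/
def Tmap (u : 𝓤) : 𝓤 := (sAnti u).unop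

theorem Tmap_iota (x : L) : Tmap (ι ℂ x) = -(ι ℂ x) := by
  unfold Tmap sAnti
  rw [lift_ι_apply]
  rfl

theorem Tmap_mul (u v : 𝓤) : Tmap (u * v) = Tmap v * Tmap u := by
  unfold Tmap; rw [map_mul]; rfl

theorem Tmap_add (u v : 𝓤) : Tmap (u + v) = Tmap u + Tmap v := by
  unfold Tmap; rw [map_add]; rfl

theorem Tmap_sub (u v : 𝓤) : Tmap (u - v) = Tmap u - Tmap v := by
  unfold Tmap; rw [map_sub]; rfl

theorem Tmap_zero : Tmap (0 : 𝓤) = 0 := by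
  unfold Tmap; rw [map_zero]; rfl

theorem Tmap_algebraMap (t : ℂ) : Tmap (algebraMap ℂ 𝓤 t) = algebraMap ℂ 𝓤 t := by
  unfold Tmap; rw [AlgHom.commutes]; rfl

theorem Tmap_comm {z : 𝓤} (hz : z ∈ Subalgebra.center ℂ 𝓤) (v : 𝓤) :
    Tmap z * v = v * Tmap z := by
  have hrange : ∀ x : L, ι ℂ x ∈ Subalgebra.centralizer ℂ ({Tmap z} : Set 𝓤) := by
    intro x
    rw [Subalgebra.mem_centralizer_iff]
    rintro m hm
    rw [Set.mem_singleton_iff] at hm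
    subst hm
    have h1 : ι ℂ x * z = z * ι ℂ x := Subalgebra.mem_center_iff.mp hz (ι ℂ x)
    have h2 := congrArg Tmap h1
    rw [Tmap_mul, Tmap_mul, Tmap_iota] at h2
    rw [neg_mul, mul_neg, neg_inj] at h2
    exact h2
  have htop := uea_subalg_top _ hrange
  have hv : v ∈ Subalgebra.centralizer ℂ ({Tmap z} : Set 𝓤) := by
    rw [htop]; exact Algebra.mem_top
  exact (Subalgebra.mem_centralizer_iff (R := ℂ)).mp hv _ rfl

variable (g : ℤ → Submodule ℂ L) (d : L) (μ : ℂ)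

theorem Tmap_verma_mem_KS (Np : LieSubalgebra ℂ L) (hInt : DirectSum.IsInternal g)
    (hNp : Np.toSubmodule = ⨆ n > (0 : ℤ), g n)
    {a : 𝓤} (ha : a ∈ vermaIdeal L Np d μ) : Tmap a ∈ KS g d μ := by
  induction ha using Submodule.span_induction with
  | mem b hb =>
      rcases hb with ⟨x, rfl⟩ | hb2
      · rw [Tmap_iota]
        refine Submodule.neg_mem _ ?_
        have hx2 : (x : L) ∈ (⨆ n > (0 : ℤ), g n) := by
          rw [← hNp]; exact x.2
        have hle : (⨆ n > (0 : ℤ), g n) ≤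
            Submodule.comap ((ι ℂ : L →ₗ⁅ℂ⁆ 𝓤) : L →ₗ[ℂ] 𝓤) (KS g d μ) := by
          refine iSup₂_le fun n hn => fun y hy => ?_
          refine Submodule.subset_span (Set.mem_iUnion.mpr
            ⟨n, Or.inl ⟨n, hn, y, hy, 1, 0, ?_, (mul_one _).symm⟩⟩)
          rw [sub_self]
          exact IsMon.one
        exact hle hx2
      · rw [Set.mem_singleton_iff] at hb2
        subst hb2
        rw [Tmap_sub, Tmap_iota, Tmap_algebraMap]
        have hgen : (ι ℂ d + algebraMap ℂ 𝓤 μ) * 1 ∈ KS g d μ :=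
          Submodule.subset_span (Set.mem_iUnion.mpr ⟨0, Or.inr ⟨1, 0, IsMon.one, rfl⟩⟩)
        rw [mul_one] at hgen
        have : -(ι ℂ d) - algebraMap ℂ 𝓤 μ = -(ι ℂ d + algebraMap ℂ 𝓤 μ) := by abel
        rw [this]
        exact Submodule.neg_mem _ hgen
  | zero => rw [Tmap_zero]; exact Submodule.zero_mem _
  | add a' b' _ _ ha' hb' => rw [Tmap_add]; exact Submodule.add_mem _ ha' hb'
  | smul u a' _ ha' =>
      rw [smul_eq_mul, Tmap_mul]
      exact KS_mul_right g d μ hInt ha' (Tmap u)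

theorem KS_inter_E0 (Nn : LieSubalgebra ℂ L)
    (hBrk : ∀ m n : ℤ, ∀ x ∈ g m, ∀ y ∈ g n, ⁅x, y⁆ ∈ g (m + n))
    (hd0 : g 0 = Submodule.span ℂ {d})
    (hdx : ∀ n : ℤ, ∀ x ∈ g n, ⁅d, x⁆ = (n : ℂ) • x)
    (hNn : Nn.toSubmodule = ⨆ n < (0 : ℤ), g n)
    {w : 𝓤} (hw : w ∈ KS g d μ) (h0 : w ∈ (adD d).eigenspace 0) :
    w ∈ lowestVermaIdeal L Nn d μ := by
  classical
  set E : ℂ → Submodule ℂ 𝓤 := (adD d).eigenspace with hE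
  set W : ℤ → Submodule ℂ 𝓤 := fun n => Submodule.span ℂ (Kset g d μ n) with hW
  have hWE : ∀ n : ℤ, W n ≤ E ((n : ℤ) : ℂ) := fun n =>
    Submodule.span_le.mpr (Kset_le_eig g d μ hd0 hdx n)
  have hKS : KS g d μ = ⨆ n : ℤ, W n := Submodule.span_iUnion _
  set X : Submodule ℂ 𝓤 := ⨆ (n : ℤ) (_ : n ≠ 0), W n with hX
  have hsup : KS g d μ ≤ W 0 ⊔ X := by
    rw [hKS]
    refine iSup_le fun n => ?_
    by_cases hn : n = 0
    · subst hn; exact le_sup_left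
    · exact le_trans (le_iSup₂ (f := fun (n : ℤ) (_ : n ≠ 0) => W n) n hn) le_sup_right
  have hXE : X ≤ ⨆ (ν : ℂ) (_ : ν ≠ 0), E ν := by
    refine iSup₂_le fun n hn => ?_
    refine le_trans (hWE n) ?_
    exact le_iSup₂ (f := fun (ν : ℂ) (_ : ν ≠ 0) => E ν) ((n : ℤ) : ℂ)
      (Int.cast_ne_zero.mpr hn)
  have hdisj : Disjoint (E 0) (⨆ (ν : ℂ) (_ : ν ≠ 0), E ν) :=
    (Module.End.eigenspaces_iSupIndep (adD d)) 0
  have hW0E : W 0 ≤ E 0 := by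
    have := hWE 0
    rwa [Int.cast_zero] at this
  have hmem : w ∈ (W 0 ⊔ X) ⊓ E 0 := ⟨hsup hw, h0⟩
  rw [sup_inf_assoc_of_le X hW0E] at hmem
  have hXbot : X ⊓ E 0 = ⊥ := by
    refine le_bot_iff.mp ?_
    refine le_trans (inf_le_inf_right (E 0) hXE) ?_
    rw [inf_comm]
    exact hdisj.le_bot
  rw [hXbot, sup_bot_eq] at hmem
  have hfin : W 0 ≤ (lowestVermaIdeal L Nn d μ).restrictScalars ℂ :=
    Submodule.span_le.mpr (Kset_zero_le_J g d μ Nn hBrk hd0 hdx hNn)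
  exact hfin hmem

end Anti

section Trans

/-- Transpose, as an algebra homomorphism from the opposite of endomorphisms. -/
def transEnd (V : Type*) [AddCommGroup V] [Module ℂ V] :
    (Module.End ℂ V)ᵐᵒᵖ →ₐ[ℂ] Module.End ℂ (Module.Dual ℂ V) where
  toFun φ := (MulOpposite.unop φ).dualMap
  map_one' := by ext f v; simp
  map_mul' φ ψ := by ext f v; simp
  map_zero' := by ext f v; simp
  map_add' φ ψ := by ext f v; simp
  commutes' r := by
    ext f v
    simp [Module.algebraMap_end_apply]

end Trans

section Trans2

variable {L : Type*} [LieRing L] [LieAlgebra ℂ L]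

local notation "𝓤" => UniversalEnvelopingAlgebra ℂ L

theorem transEnd_eq (J : Submodule 𝓤 𝓤) :
    (transEnd (𝓤 ⧸ J)).comp
        ((AlgHom.op (Algebra.lsmul ℂ ℂ (𝓤 ⧸ J))).comp sAnti)
      = UniversalEnvelopingAlgebra.lift ℂ
        (dualLieRep (((Algebra.lsmul ℂ ℂ (𝓤 ⧸ J) :
          𝓤 →ₐ[ℂ] Module.End ℂ (𝓤 ⧸ J)).toLieHom).comp (ι ℂ))) := by
  rw [← UniversalEnvelopingAlgebra.lift_unique]
  funext x
  have hsx : sAnti (ι ℂ x) = -MulOpposite.op (ι ℂ x) := by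
    unfold sAnti
    rw [lift_ι_apply]
    rfl
  show transEnd _ ((AlgHom.op (Algebra.lsmul ℂ ℂ _)) (sAnti (ι ℂ x))) = _
  rw [hsx]
  ext f' w
  simp [transEnd, dualLieRep, Algebra.lsmul_coe]

end Trans2

/-- In the graded setting: if a central element `z` of `U(𝔤)` acts on the Verma module
`M(μ)` by the scalar `c`, then `z` acts by `c` on the dual `N(−μ)*` of the lowest-weight
Verma module, where the `U(𝔤)`-action on `N(−μ)*` is the one induced (via the universal
property of `U(𝔤)`) by the Lie algebra action `(x·f)(w) = −f(x·w)`. -/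
theorem stmt_11 (L : Type*) [LieRing L] [LieAlgebra ℂ L]
    (g : ℤ → Submodule ℂ L) (hInt : DirectSum.IsInternal g)
    (hBrk : ∀ m n : ℤ, ∀ x ∈ g m, ∀ y ∈ g n, ⁅x, y⁆ ∈ g (m + n))
    (d : L) (hd : d ≠ 0) (hd0 : g 0 = Submodule.span ℂ {d})
    (hdx : ∀ n : ℤ, ∀ x ∈ g n, ⁅d, x⁆ = (n : ℂ) • x)
    (Np : LieSubalgebra ℂ L) (hNp : Np.toSubmodule = ⨆ n > (0 : ℤ), g n)
    (Nn : LieSubalgebra ℂ L) (hNn : Nn.toSubmodule = ⨆ n < (0 : ℤ), g n)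
    (μ : ℂ)
    (z : UniversalEnvelopingAlgebra ℂ L)
    (hz : z ∈ Subalgebra.center ℂ (UniversalEnvelopingAlgebra ℂ L)) (c : ℂ)
    (hM : ∀ m : UniversalEnvelopingAlgebra ℂ L ⧸ vermaIdeal L Np d μ,
      z • m = c • m) :
    ∀ f : Module.Dual ℂ (UniversalEnvelopingAlgebra ℂ L ⧸ lowestVermaIdeal L Nn d μ),
      UniversalEnvelopingAlgebra.lift ℂ
        (dualLieRep (((Algebra.lsmul ℂ ℂ
            (UniversalEnvelopingAlgebra ℂ L ⧸ lowestVermaIdeal L Nn d μ) :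
          UniversalEnvelopingAlgebra ℂ L →ₐ[ℂ] Module.End ℂ
            (UniversalEnvelopingAlgebra ℂ L ⧸ lowestVermaIdeal L Nn d μ)).toLieHom).comp
          (ι ℂ))) z f = c • f := by
  intro f
  -- Step 1 : `z - c` lies in the Verma ideal.
  have hzc : z - algebraMap ℂ (UniversalEnvelopingAlgebra ℂ L) c ∈ vermaIdeal L Np d μ := by
    have h1 := hM (Submodule.Quotient.mk (1 : UniversalEnvelopingAlgebra ℂ L))
    rw [← Submodule.Quotient.mk_smul, ← Submodule.Quotient.mk_smul,
      Submodule.Quotient.eq] at h1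
    simpa [smul_eq_mul, Algebra.algebraMap_eq_smul_one] using h1
  -- Step 2 : its antipode, `Tmap z - c`, lies in the right ideal `KS`.
  have hTzKS : Tmap z - algebraMap ℂ (UniversalEnvelopingAlgebra ℂ L) c ∈ KS g d μ := by
    have := Tmap_verma_mem_KS g d μ Np hInt hNp hzc
    rwa [Tmap_sub, Tmap_algebraMap] at this
  -- Step 3 : it is also killed by `ad (ι d)` since `Tmap z` is central.
  have hcomm : ∀ v, Tmap z * v = v * Tmap z := fun v => Tmap_comm hz v
  have hE0 : Tmap z - algebraMap ℂ (UniversalEnvelopingAlgebra ℂ L) c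
      ∈ (adD d).eigenspace 0 := by
    rw [Module.End.mem_eigenspace_iff, adD_apply, zero_smul, mul_sub, sub_mul]
    rw [← hcomm (ι ℂ d), Algebra.commutes]
    abel
  -- Step 4 : hence it lies in the lowest-weight Verma ideal.
  have hJmem : Tmap z - algebraMap ℂ (UniversalEnvelopingAlgebra ℂ L) c
      ∈ lowestVermaIdeal L Nn d μ :=
    KS_inter_E0 g d μ Nn hBrk hd0 hdx hNn hTzKS hE0
  -- Step 5 : identify the lifted dual action with the transpose of the antipode action.
  have hEq := transEnd_eq (L := L) (lowestVermaIdeal L Nn d μ)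
  have hzf := LinearMap.congr_fun (DFunLike.congr_fun hEq z) f
  rw [← hzf]
  show transEnd _ ((AlgHom.op (Algebra.lsmul ℂ ℂ _)) (sAnti z)) f = c • f
  -- Step 6 : compute the action on the dual.
  apply LinearMap.ext
  intro w
  obtain ⟨u, rfl⟩ := Submodule.Quotient.mk_surjective _ w
  have hkey : (Submodule.Quotient.mk (Tmap z * u) :
      UniversalEnvelopingAlgebra ℂ L ⧸ lowestVermaIdeal L Nn d μ)
      = c • Submodule.Quotient.mk u := by
    have h1 : Tmap z * u - c • u ∈ lowestVermaIdeal L Nn d μ := by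
      rw [hcomm u, show (c • u : UniversalEnvelopingAlgebra ℂ L)
          = u * algebraMap ℂ (UniversalEnvelopingAlgebra ℂ L) c from by
        rw [Algebra.smul_def, ← Algebra.commutes], ← mul_sub]
      exact J_mul_left Nn d μ hJmem u
    calc (Submodule.Quotient.mk (Tmap z * u) :
        UniversalEnvelopingAlgebra ℂ L ⧸ lowestVermaIdeal L Nn d μ)
        = Submodule.Quotient.mk (c • u) := (Submodule.Quotient.eq _).mpr h1
      _ = c • Submodule.Quotient.mk u := Submodule.Quotient.mk_smul _ c u
  have hlhs : (transEnd (UniversalEnvelopingAlgebra ℂ L ⧸ lowestVermaIdeal L Nn d μ)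
      ((AlgHom.op (Algebra.lsmul ℂ ℂ
        (UniversalEnvelopingAlgebra ℂ L ⧸ lowestVermaIdeal L Nn d μ))) (sAnti z)) f)
      (Submodule.Quotient.mk u)
      = f (Tmap z • (Submodule.Quotient.mk u :
          UniversalEnvelopingAlgebra ℂ L ⧸ lowestVermaIdeal L Nn d μ)) := by
    simp [transEnd, Tmap, Algebra.lsmul_coe]
  rw [hlhs]
  have hsm : Tmap z • (Submodule.Quotient.mk u :
      UniversalEnvelopingAlgebra ℂ L ⧸ lowestVermaIdeal L Nn d μ)
      = Submodule.Quotient.mk (Tmap z * u) := by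
    rw [← smul_eq_mul]
    exact (Submodule.Quotient.mk_smul _ _ _).symm
  rw [hsm, hkey, map_smul]
  rfl
end
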